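/- arXiv:1303.1921 — 5 statements merged into one kernel-verified Lean document; each statement's English description precedes it below -/
import Mathlib

section
/- The square root of x1 + x2 cannot be expressed as a formal power series in x1^(1/m) and x2^(1/m) for any positive integer m; that is, there is no element f of k[[x1^(1/m), x2^(1/m)]] with f^2 = x1 + x2, when k is a field of characteristic zero. -/
open MvPowerSeries Finsupp

namespace NoSqrtAux

noncomputable def D (a b : ℕ) : Fin 2 →₀ ℕ := Finsupp.single 0 a + Finsupp.single 1 b

lemma D_apply_zero (a b : ℕ) : D a b 0 = a := by
  simp [D, Finsupp.single_apply]

lemma D_apply_one (a b : ℕ) : D a b 1 = b := by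
  simp [D, Finsupp.single_apply]

lemma degree_fin2 (d : Fin 2 →₀ ℕ) : Finsupp.degree d = d 0 + d 1 := by
  rw [Finsupp.degree_apply, Finset.sum_subset (Finset.subset_univ d.support)
    (fun i _ hi => Finsupp.notMem_support_iff.mp hi)]
  exact Fin.sum_univ_two d

lemma degree_add2 (u v : Fin 2 →₀ ℕ) :
    Finsupp.degree (u + v) = Finsupp.degree u + Finsupp.degree v := by
  simp only [degree_fin2, Finsupp.add_apply]; ring

lemma eq_D (d : Fin 2 →₀ ℕ) : d = D (d 0) (d 1) := by
  ext i
  fin_cases i <;> simp [D, Finsupp.single_apply]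

lemma degree_D (a b : ℕ) : Finsupp.degree (D a b) = a + b := by
  rw [degree_fin2, D_apply_zero, D_apply_one]

lemma single_ne (m : ℕ) (hm : 0 < m) :
    Finsupp.single (0 : Fin 2) m ≠ Finsupp.single 1 m := by
  intro h
  have := DFunLike.congr_fun h 0
  simp [Finsupp.single_apply] at this
  omega

end NoSqrtAux

open NoSqrtAux

/-- **No square root of `x₁ + x₂` as a Puiseux-type power series.**
Writing `yᵢ = xᵢ^(1/m)`, the ring `k[[x₁^(1/m), x₂^(1/m)]]` is identified with the formal
power series ring `k[[y₁, y₂]]`, in which `x₁ + x₂ = y₁^m + y₂^m`.  The statement: for every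
positive integer `m` there is no formal power series `f ∈ k[[y₁,y₂]]` with
`f ^ 2 = y₁ ^ m + y₂ ^ m`, i.e. the square root of `x₁ + x₂` cannot be expressed as a formal
power series in `x₁^(1/m)` and `x₂^(1/m)`. -/
theorem no_sqrt_of_x1_add_x2 (k : Type*) [Field k] [CharZero k] (m : ℕ) (hm : 0 < m) :
    ¬ ∃ f : MvPowerSeries (Fin 2) k,
        f ^ 2 = (MvPowerSeries.X 0 : MvPowerSeries (Fin 2) k) ^ m + (MvPowerSeries.X 1) ^ m := by
  classical
  rintro ⟨f, hf⟩
  -- coefficients of the RHS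
  have hScoeff : ∀ d : Fin 2 →₀ ℕ, MvPowerSeries.coeff d (f ^ 2) ≠ 0 →
      d = Finsupp.single 0 m ∨ d = Finsupp.single 1 m := by
    intro d hd
    rw [hf, map_add, MvPowerSeries.coeff_X_pow, MvPowerSeries.coeff_X_pow] at hd
    by_contra h
    push_neg at h
    rw [if_neg h.1, if_neg h.2, add_zero] at hd
    exact hd rfl
  have hS0 : MvPowerSeries.coeff (Finsupp.single 0 m) (f ^ 2) = 1 := by
    rw [hf, map_add, MvPowerSeries.coeff_X_pow, MvPowerSeries.coeff_X_pow,
      if_pos rfl, if_neg (single_ne m hm), add_zero]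
  have hf2ne : f ^ 2 ≠ 0 := by
    intro h
    rw [h, map_zero] at hS0
    exact one_ne_zero hS0.symm
  have hfne : f ≠ 0 := by
    intro h
    exact hf2ne (by rw [h]; exact zero_pow two_ne_zero)
  have hofin := MvPowerSeries.ne_zero_iff_order_finite.mp hfne
  set e := f.order.toNat with he
  have heq : f.order = (e : ℕ∞) := hofin.symm
  obtain ⟨d₀, hd₀ne, hd₀deg⟩ := MvPowerSeries.exists_coeff_ne_zero_and_order hofin
  have hd₀deg' : Finsupp.degree d₀ = e := by
    rw [heq] at hd₀deg; exact_mod_cast hd₀deg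
  have hlow : ∀ d : Fin 2 →₀ ℕ, Finsupp.degree d < e → MvPowerSeries.coeff d f = 0 := by
    intro d hd
    exact MvPowerSeries.coeff_of_lt_order (by rw [heq]; exact_mod_cast hd)
  set g := MvPowerSeries.homogeneousComponent e f with hg
  have hgcoeff : ∀ d : Fin 2 →₀ ℕ, MvPowerSeries.coeff d g =
      if Finsupp.degree d = e then MvPowerSeries.coeff d f else 0 :=
    fun d => MvPowerSeries.coeff_homogeneousComponent e d f
  have hgne : g ≠ 0 := by
    intro h
    apply hd₀ne
    have := congrArg (MvPowerSeries.coeff d₀) h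
    rwa [hgcoeff, if_pos hd₀deg', map_zero] at this
  have hgg0 : ∀ d : Fin 2 →₀ ℕ, Finsupp.degree d ≠ 2 * e →
      MvPowerSeries.coeff d (g * g) = 0 := by
    intro d hd
    rw [MvPowerSeries.coeff_mul]
    apply Finset.sum_eq_zero
    rintro ⟨u, v⟩ huv
    rw [Finset.HasAntidiagonal.mem_antidiagonal] at huv
    by_cases hu : Finsupp.degree u = e
    · have hv : Finsupp.degree v ≠ e := by
        intro hv
        apply hd
        rw [← huv, degree_add2, hu, hv]; ring
      rw [hgcoeff v, if_neg hv, mul_zero]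
    · rw [hgcoeff u, if_neg hu, zero_mul]
  have hggf : ∀ d : Fin 2 →₀ ℕ, Finsupp.degree d = 2 * e →
      MvPowerSeries.coeff d (g * g) = MvPowerSeries.coeff d (f * f) := by
    intro d hd
    rw [MvPowerSeries.coeff_mul, MvPowerSeries.coeff_mul]
    apply Finset.sum_congr rfl
    rintro ⟨u, v⟩ huv
    rw [Finset.HasAntidiagonal.mem_antidiagonal] at huv
    have hsum : Finsupp.degree u + Finsupp.degree v = 2 * e := by
      rw [← degree_add2, huv, hd]
    by_cases hu : Finsupp.degree u = e
    · have hv : Finsupp.degree v = e := by omega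
      rw [hgcoeff u, hgcoeff v, if_pos hu, if_pos hv]
    · rcases lt_or_gt_of_ne hu with h | h
      · rw [hgcoeff u, if_neg hu, hlow u h, zero_mul, zero_mul]
      · have hv : Finsupp.degree v < e := by omega
        rw [hgcoeff v, if_neg hv.ne, hlow v hv, mul_zero, mul_zero]
  -- m = 2 * e
  obtain ⟨d₁, hd₁⟩ : ∃ d, MvPowerSeries.coeff d (g * g) ≠ 0 := by
    by_contra h
    push_neg at h
    exact mul_ne_zero hgne hgne (MvPowerSeries.ext h)
  have hd₁deg : Finsupp.degree d₁ = 2 * e := by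
    by_contra h
    exact hd₁ (hgg0 d₁ h)
  have hd₁f : MvPowerSeries.coeff d₁ (f ^ 2) ≠ 0 := by
    rw [sq]
    rw [← hggf d₁ hd₁deg]
    exact hd₁
  have hm2e : m = 2 * e := by
    rcases hScoeff d₁ hd₁f with h | h <;>
    · rw [h] at hd₁deg
      rw [degree_fin2] at hd₁deg
      simp [Finsupp.single_apply] at hd₁deg
      omega
  -- g * g = f ^ 2
  have hfg : g * g = f ^ 2 := by
    ext d
    by_cases hd : Finsupp.degree d = 2 * e
    · rw [hggf d hd, sq]
    · rw [hgg0 d hd]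
      by_contra h
      rcases hScoeff d (fun h' => h h'.symm) with h' | h' <;>
      · apply hd
        rw [h', degree_fin2]
        simp [Finsupp.single_apply]
        omega
  set c : ℕ → k := fun i => MvPowerSeries.coeff (D i (e - i)) f with hc
  set P : MvPolynomial (Fin 2) k :=
    ∑ i ∈ Finset.range (e + 1), MvPolynomial.monomial (D i (e - i)) (c i) with hP
  have hPg : (↑P : MvPowerSeries (Fin 2) k) = g := by
    ext d
    rw [MvPolynomial.coeff_coe, hP]
    rw [MvPolynomial.coeff_sum]
    simp only [MvPolynomial.coeff_monomial]
    by_cases hd : Finsupp.degree d = e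
    · have hd0 : d 0 ≤ e := by rw [degree_fin2] at hd; omega
      have hdD : d = D (d 0) (e - d 0) := by
        have h1 : d 1 = e - d 0 := by rw [degree_fin2] at hd; omega
        have h2 := eq_D d
        rwa [h1] at h2
      rw [Finset.sum_eq_single (d 0)]
      · rw [if_pos hdD.symm, hgcoeff d, if_pos hd]
        show MvPowerSeries.coeff (D (d 0) (e - d 0)) f = MvPowerSeries.coeff d f
        rw [← hdD]
      · intro i _ hine
        rw [if_neg]
        intro hEq
        apply hine
        rw [← D_apply_zero i (e - i), hEq]
      · intro h
        exact absurd (Finset.mem_range.mpr (Nat.lt_succ_of_le hd0)) h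
    · rw [hgcoeff d, if_neg hd]
      apply Finset.sum_eq_zero
      intro i hi
      rw [if_neg]
      intro hEq
      apply hd
      rw [← hEq, degree_D]
      rw [Finset.mem_range] at hi
      omega
  have hPP : P * P = MvPolynomial.X 0 ^ m + MvPolynomial.X 1 ^ m := by
    apply MvPolynomial.coe_injective
    show ((P * P : MvPolynomial (Fin 2) k) : MvPowerSeries (Fin 2) k) =
      ((MvPolynomial.X 0 ^ m + MvPolynomial.X 1 ^ m : MvPolynomial (Fin 2) k) :
        MvPowerSeries (Fin 2) k)
    rw [MvPolynomial.coe_mul, MvPolynomial.coe_add, MvPolynomial.coe_pow,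
      MvPolynomial.coe_pow, MvPolynomial.coe_X, MvPolynomial.coe_X, hPg, hfg]
    exact hf
  set φ := MvPolynomial.aeval (R := k) ![Polynomial.X, (1 : Polynomial k)] with hφ
  set Q : Polynomial k := φ P with hQdef
  have hQ : Q * Q = Polynomial.X ^ m - Polynomial.C (-1 : k) := by
    have h := congrArg φ hPP
    rw [map_mul, map_add, map_pow, map_pow, MvPolynomial.aeval_X, MvPolynomial.aeval_X] at h
    rw [map_neg, sub_neg_eq_add, map_one]
    simpa using h
  have hsq : Squarefree (Polynomial.X ^ m - Polynomial.C (-1 : k)) :=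
    (Polynomial.separable_X_pow_sub_C (-1) (Nat.cast_ne_zero.mpr hm.ne')
      (neg_ne_zero.mpr one_ne_zero)).squarefree
  have hunit : IsUnit Q := hsq Q (Dvd.intro 1 (by rw [mul_one, hQ]))
  have hQ0 : Q.natDegree = 0 := Polynomial.natDegree_eq_zero_of_isUnit hunit
  have hdegQQ : (Q * Q).natDegree ≤ 0 := by
    calc (Q * Q).natDegree ≤ Q.natDegree + Q.natDegree := Polynomial.natDegree_mul_le
    _ = 0 := by rw [hQ0]
  rw [hQ, Polynomial.natDegree_X_pow_sub_C] at hdegQQ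
  omega
end

section
/- Let ν be an Abhyankar valuation, P(Z) ∈ V^{fg}_ν[Z] a monic polynomial of degree d with no multiple factor, with irreducible monic factorization P = P_1 ⋯ P_r, roots z_1,...,z_d, and coefficients a_i. Let Q(Z) ∈ V^{fg}_ν[Z] be monic of degree d with coefficients b_i. If min_i ν(a_i − b_i) > d · max_{i≠j} ν(z_i − z_j), then Q factors as Q = Q_1 ⋯ Q_r with each Q_i monic irreducible in V^{fg}_ν[Z] and ν(Q_i − P_i) ≥ (min_i ν(a_i − b_i))/d (meaning every coefficient of Q_i − P_i has at least this valuation). -/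
open scoped BigOperators

open Polynomial

section AuxVal

variable {K : Type*} [Field K] (w : K → ℝ)

/-- `x` is zero or has valuation at least `b`. -/
def Wge (b : ℝ) (x : K) : Prop := x = 0 ∨ b ≤ w x

variable (hw_mul : ∀ x y : K, x ≠ 0 → y ≠ 0 → w (x * y) = w x + w y)
variable (hw_add : ∀ x y : K, x ≠ 0 → y ≠ 0 → x + y ≠ 0 → min (w x) (w y) ≤ w (x + y))

include hw_mul in
theorem w_one : w 1 = 0 := by
  have := hw_mul 1 1 one_ne_zero one_ne_zero
  simp at this; linarith

include hw_mul in
theorem w_neg {x : K} (hx : x ≠ 0) : w (-x) = w x := by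
  have h1 : w (-1 : K) = 0 := by
    have := hw_mul (-1) (-1) (by norm_num) (by norm_num)
    have h0 := w_one w hw_mul
    simp at this; linarith
  have := hw_mul (-1) x (by norm_num) hx
  simp only [neg_one_mul] at this
  rw [this, h1, zero_add]

include hw_mul in
theorem w_pow {x : K} (hx : x ≠ 0) (n : ℕ) : w (x ^ n) = n * w x := by
  induction n with
  | zero => simpa using w_one w hw_mul
  | succ k ih =>
      rw [pow_succ, hw_mul _ _ (pow_ne_zero _ hx) hx, ih]
      push_cast; ring

include hw_add in
theorem Wge.add {b : ℝ} {x y : K} (hx : Wge w b x) (hy : Wge w b y) : Wge w b (x + y) := by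
  by_cases hx0 : x = 0
  · subst hx0; simpa using hy
  by_cases hy0 : y = 0
  · subst hy0; simpa using hx
  rcases hx with rfl | hx
  · exact absurd rfl hx0
  rcases hy with rfl | hy
  · exact absurd rfl hy0
  by_cases h : x + y = 0
  · exact Or.inl h
  · exact Or.inr (le_trans (le_min hx hy) (hw_add x y hx0 hy0 h))

include hw_mul in
theorem Wge.mul {a b : ℝ} {x y : K} (hx : Wge w a x) (hy : Wge w b y) :
    Wge w (a + b) (x * y) := by
  rcases hx with rfl | hx
  · exact Or.inl (by simp)
  rcases hy with rfl | hy
  · exact Or.inl (by simp)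
  by_cases hx0 : x = 0
  · exact Or.inl (by simp [hx0])
  by_cases hy0 : y = 0
  · exact Or.inl (by simp [hy0])
  exact Or.inr (by rw [hw_mul x y hx0 hy0]; exact add_le_add hx hy)

include hw_add in
theorem Wge.sum {ι : Type*} {b : ℝ} (s : Finset ι) (f : ι → K)
    (h : ∀ i ∈ s, Wge w b (f i)) : Wge w b (∑ i ∈ s, f i) := by
  classical
  induction s using Finset.induction with
  | empty => exact Or.inl (by simp)
  | insert _ _ hni ih =>
      rename_i a s
      rw [Finset.sum_insert hni]
      exact Wge.add w hw_add (h a (Finset.mem_insert_self a s))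
        (ih fun i hi => h i (Finset.mem_insert_of_mem hi))

include hw_mul in
theorem Wge.prod0 {ι : Type*} (s : Finset ι) (f : ι → K)
    (h : ∀ i ∈ s, Wge w 0 (f i)) : Wge w 0 (∏ i ∈ s, f i) := by
  classical
  induction s using Finset.induction with
  | empty => exact Or.inr (by simpa using (w_one w hw_mul).ge)
  | insert _ _ hni ih =>
      rename_i a s
      rw [Finset.prod_insert hni]
      have := Wge.mul w hw_mul (h a (Finset.mem_insert_self a s))
        (ih fun i hi => h i (Finset.mem_insert_of_mem hi))
      simpa using this

include hw_mul in
theorem Wge.pow0 {x : K} (hx : Wge w 0 x) (n : ℕ) : Wge w 0 (x ^ n) := by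
  rcases hx with rfl | hx
  · rcases Nat.eq_zero_or_pos n with rfl | hn
    · exact Or.inr (by simpa using (w_one w hw_mul).ge)
    · exact Or.inl (zero_pow hn.ne')
  by_cases hx0 : x = 0
  · subst hx0
    rcases Nat.eq_zero_or_pos n with rfl | hn
    · exact Or.inr (by simpa using (w_one w hw_mul).ge)
    · exact Or.inl (zero_pow hn.ne')
  exact Or.inr (by rw [w_pow w hw_mul hx0]; positivity)

/-- All coefficients of `p` are zero or have valuation at least `b`. -/
def PolyWge (b : ℝ) (p : K[X]) : Prop := ∀ j, Wge w b (p.coeff j)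

include hw_mul hw_add in
theorem PolyWge.mul0 {p q : K[X]} (hp : PolyWge w 0 p) (hq : PolyWge w 0 q) :
    PolyWge w 0 (p * q) := by
  intro n
  rw [coeff_mul]
  refine Wge.sum w hw_add _ _ fun ij _ => ?_
  simpa using Wge.mul w hw_mul (hp ij.1) (hq ij.2)

include hw_mul hw_add in
theorem PolyWge.mulb {b : ℝ} {p q : K[X]} (hp : PolyWge w b p) (hq : PolyWge w 0 q) :
    PolyWge w b (p * q) := by
  intro n
  rw [coeff_mul]
  refine Wge.sum w hw_add _ _ fun ij _ => ?_
  simpa using Wge.mul w hw_mul (hp ij.1) (hq ij.2)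

include hw_mul hw_add in
theorem PolyWge.prod0 {ι : Type*} (s : Finset ι) (f : ι → K[X])
    (h : ∀ i ∈ s, PolyWge w 0 (f i)) : PolyWge w 0 (∏ i ∈ s, f i) := by
  classical
  induction s using Finset.induction with
  | empty =>
      intro j
      rcases Nat.eq_zero_or_pos j with rfl | hj
      · exact Or.inr (by simpa using (w_one w hw_mul).ge)
      · exact Or.inl (by simp [Polynomial.coeff_one, hj.ne'])
  | insert _ _ hni ih =>
      rename_i a s
      rw [Finset.prod_insert hni]
      exact PolyWge.mul0 w hw_mul hw_add (h a (Finset.mem_insert_self a s))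
        (ih fun i hi => h i (Finset.mem_insert_of_mem hi))

include hw_mul in
theorem PolyWge.X_sub_C {a : K} (ha : Wge w 0 a) : PolyWge w 0 (X - C a) := by
  intro j
  rcases Nat.lt_or_ge j 2 with hj | hj
  · interval_cases j
    · simp only [coeff_sub, coeff_X_zero, coeff_C_zero, zero_sub]
      rcases ha with rfl | ha
      · exact Or.inl (by simp)
      by_cases ha0 : a = 0
      · exact Or.inl (by simp [ha0])
      · exact Or.inr (by rw [w_neg w hw_mul ha0]; exact ha)
    · simp only [coeff_sub, coeff_X_one, coeff_C, if_neg one_ne_zero, sub_zero]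
      exact Or.inr (w_one w hw_mul).ge
  · have : (X - C a).coeff j = 0 := by
      rw [coeff_sub, coeff_X, coeff_C, if_neg (by omega), if_neg (by omega), sub_zero]
    exact Or.inl this

theorem Wge.mono {a b : ℝ} {x : K} (h : Wge w b x) (hab : a ≤ b) : Wge w a x := by
  rcases h with rfl | h
  · exact Or.inl rfl
  · exact Or.inr (hab.trans h)

include hw_mul hw_add in
theorem PolyWge.eval {b : ℝ} {p : K[X]} (hp : PolyWge w b p) {x : K} (hx : Wge w 0 x) :
    Wge w b (p.eval x) := by
  rw [Polynomial.eval_eq_sum_range]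
  refine Wge.sum w hw_add _ _ fun i _ => ?_
  simpa using Wge.mul w hw_mul (hp i) (Wge.pow0 w hw_mul hx i)

include hw_mul hw_add in
theorem wge_zero_root {p : K[X]} (hm : p.Monic) (hp : PolyWge w 0 p) {y : K}
    (hy : p.eval y = 0) : Wge w 0 y := by
  by_cases hy0 : y = 0
  · exact Or.inl hy0
  refine Or.inr (le_of_not_gt fun hneg => ?_)
  set n := p.natDegree with hn
  have hn1 : 1 ≤ n := by
    rcases Nat.eq_zero_or_pos n with h0 | h
    · exfalso
      have hp1 : p = 1 := (Polynomial.Monic.natDegree_eq_zero hm).mp (hn ▸ h0)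
      rw [hp1] at hy
      simpa using hy
    · exact h
  have hev := hy
  rw [Polynomial.eval_eq_sum_range, Finset.sum_range_succ, ← hn,
    hm.coeff_natDegree, one_mul] at hev
  have hyn : y ^ n = -∑ i ∈ Finset.range n, p.coeff i * y ^ i := by
    linear_combination hev
  have hsum : Wge w (((n : ℝ) - 1) * w y) (∑ i ∈ Finset.range n, p.coeff i * y ^ i) := by
    refine Wge.sum w hw_add _ _ fun i hi => ?_
    have hterm : Wge w (0 + (i : ℝ) * w y) (p.coeff i * y ^ i) :=
      Wge.mul w hw_mul (hp i) (Or.inr (w_pow w hw_mul hy0 i).ge)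
    refine hterm.mono w ?_
    rw [zero_add]
    have hi' : (i : ℝ) ≤ (n : ℝ) - 1 := by
      have := Finset.mem_range.mp hi
      have : (i : ℝ) ≤ (n : ℝ) - 1 := by
        have h2 : i + 1 ≤ n := Finset.mem_range.mp hi
        push_cast
        have : (i : ℝ) + 1 ≤ (n : ℝ) := by exact_mod_cast h2
        linarith
      exact this
    nlinarith
  have hne : y ^ n ≠ 0 := pow_ne_zero _ hy0
  have hsumne : (∑ i ∈ Finset.range n, p.coeff i * y ^ i) ≠ 0 := by
    intro h0; rw [h0, neg_zero] at hyn; exact hne hyn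
  rcases hsum with h0 | hle
  · exact hsumne h0
  have hw1 : w (y ^ n) = (n : ℝ) * w y := w_pow w hw_mul hy0 n
  have hw2 : w (y ^ n) = w (∑ i ∈ Finset.range n, p.coeff i * y ^ i) := by
    rw [hyn, w_neg w hw_mul hsumne]
  have : ((n : ℝ) - 1) * w y ≤ (n : ℝ) * w y := by rw [← hw1, hw2]; exact hle
  nlinarith

include hw_mul in
theorem Wge.neg {b : ℝ} {x : K} (h : Wge w b x) : Wge w b (-x) := by
  rcases h with rfl | h
  · exact Or.inl (by simp)
  by_cases hx : x = 0
  · exact Or.inl (by simp [hx])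
  · exact Or.inr (by rw [w_neg w hw_mul hx]; exact h)

include hw_mul in
theorem w_finset_prod {ι : Type*} (s : Finset ι) (f : ι → K) (h : ∀ i ∈ s, f i ≠ 0) :
    w (∏ i ∈ s, f i) = ∑ i ∈ s, w (f i) := by
  classical
  induction s using Finset.induction with
  | empty => simpa using w_one w hw_mul
  | insert _ _ hni ih =>
      rename_i a s
      rw [Finset.prod_insert hni, Finset.sum_insert hni,
        hw_mul _ _ (h a (Finset.mem_insert_self a s))
          (Finset.prod_ne_zero_iff.mpr fun i hi => h i (Finset.mem_insert_of_mem hi)),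
        ih fun i hi => h i (Finset.mem_insert_of_mem hi)]

include hw_mul in
theorem w_multiset_prod (s : Multiset K) (h : ∀ x ∈ s, x ≠ 0) :
    w s.prod = (s.map w).sum := by
  classical
  induction s using Multiset.induction with
  | empty => simpa using w_one w hw_mul
  | cons a s ih =>
      rw [Multiset.prod_cons, Multiset.map_cons, Multiset.sum_cons,
        hw_mul _ _ (h a (Multiset.mem_cons_self a s))
          (Multiset.prod_ne_zero fun h0 => h 0 (Multiset.mem_cons_of_mem h0) rfl),
        ih fun x hx => h x (Multiset.mem_cons_of_mem hx)]

/-- `y` is "near" `zz`: equal, or at distance of valuation `> M`. -/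
def VNear (M : ℝ) (zz y : K) : Prop := zz = y ∨ (zz ≠ y ∧ M < w (zz - y))

include hw_mul hw_add in
theorem vnear_unique {ι : Type*} {M : ℝ} (z : ι → K) (hzinj : Function.Injective z)
    (hM : ∀ i j, i ≠ j → w (z i - z j) ≤ M) {y : K} {i j : ι}
    (hi : VNear w M (z i) y) (hj : VNear w M (z j) y) : i = j := by
  by_contra hij
  have hzz : w (z i - z j) ≤ M := hM i j hij
  have hne : z i - z j ≠ 0 := sub_ne_zero.mpr fun h => hij (hzinj h)
  rcases hi with hi | ⟨hi1, hi2⟩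
  · rcases hj with hj | ⟨hj1, hj2⟩
    · exact hij (hzinj (hi.trans hj.symm))
    · have : z j - y = z j - z i := by rw [hi]
      rw [this] at hj2
      exact absurd (hM j i (Ne.symm hij)) (not_le.mpr hj2)
  · rcases hj with hj | ⟨hj1, hj2⟩
    · have : z i - y = z i - z j := by rw [hj]
      rw [this] at hi2
      exact absurd hzz (not_le.mpr hi2)
    · have hiy : z i - y ≠ 0 := sub_ne_zero.mpr hi1
      have hjy : z j - y ≠ 0 := sub_ne_zero.mpr hj1
      have hkey : z i - z j = (z i - y) + (-(z j - y)) := by ring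
      have hneg : (-(z j - y)) ≠ 0 := neg_ne_zero.mpr hjy
      have := hw_add _ _ hiy hneg (by rw [← hkey]; exact hne)
      rw [← hkey, w_neg w hw_mul hjy] at this
      have : M < w (z i - z j) := lt_of_lt_of_le (lt_min hi2 hj2) this
      exact absurd hzz (not_le.mpr this)

include hw_add in
theorem PolyWge.addP {b : ℝ} {p q : K[X]} (hp : PolyWge w b p) (hq : PolyWge w b q) :
    PolyWge w b (p + q) := fun j => by
  rw [coeff_add]; exact Wge.add w hw_add (hp j) (hq j)

include hw_mul hw_add in
theorem PolyWge.prod_sub_prod {ι : Type*} {b : ℝ} (s : Finset ι) (f g : ι → K[X])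
    (hf : ∀ k ∈ s, PolyWge w 0 (f k)) (hg : ∀ k ∈ s, PolyWge w 0 (g k))
    (hfg : ∀ k ∈ s, PolyWge w b (f k - g k)) :
    PolyWge w b (∏ k ∈ s, f k - ∏ k ∈ s, g k) := by
  classical
  induction s using Finset.induction with
  | empty => intro j; simp only [Finset.prod_empty, sub_self, coeff_zero]; exact Or.inl rfl
  | insert _ _ hni ih =>
      rename_i a s
      rw [Finset.prod_insert hni, Finset.prod_insert hni]
      have key : f a * ∏ k ∈ s, f k - g a * ∏ k ∈ s, g k
          = (∏ k ∈ s, f k - ∏ k ∈ s, g k) * f a + (f a - g a) * ∏ k ∈ s, g k := by ring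
      rw [key]
      have h1 : PolyWge w b ((∏ k ∈ s, f k - ∏ k ∈ s, g k) * f a) :=
        PolyWge.mulb w hw_mul hw_add
          (ih (fun k hk => hf k (Finset.mem_insert_of_mem hk))
            (fun k hk => hg k (Finset.mem_insert_of_mem hk))
            (fun k hk => hfg k (Finset.mem_insert_of_mem hk)))
          (hf a (Finset.mem_insert_self a s))
      have h2 : PolyWge w b ((f a - g a) * ∏ k ∈ s, g k) :=
        PolyWge.mulb w hw_mul hw_add (hfg a (Finset.mem_insert_self a s))
          (PolyWge.prod0 w hw_mul hw_add s g fun k hk => hg k (Finset.mem_insert_of_mem hk))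
      exact PolyWge.addP w hw_add h1 h2

end AuxVal

theorem monic_eq_of_dvd_of_natDegree_le {K : Type*} [Field K] {p q : Polynomial K}
    (hp : p.Monic) (hq : q.Monic) (hdvd : q ∣ p) (hdeg : p.natDegree ≤ q.natDegree) :
    p = q := by
  obtain ⟨u, rfl⟩ := hdvd
  have hq0 : q ≠ 0 := hq.ne_zero
  have hu0 : u ≠ 0 := by
    intro h; rw [h, mul_zero] at hp; exact hp.ne_zero rfl
  have hdeg' : (q * u).natDegree = q.natDegree + u.natDegree :=
    Polynomial.natDegree_mul hq0 hu0
  have hu_deg : u.natDegree = 0 := by omega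
  have hu_monic : u.Monic := by
    have := hp.leadingCoeff
    rw [Polynomial.leadingCoeff_mul, hq.leadingCoeff, one_mul] at this
    exact this
  rw [Polynomial.eq_one_of_monic_natDegree_zero hu_monic hu_deg, mul_one]


open IntermediateField in
/-- **Proposition (continuity of the irreducible factorization).**
Here `Kfg` denotes the fraction field `K^{fg}_ν` of the ring `V^{fg}_ν` of elements of the
completed valuation ring whose `ν`-support lies in a finitely generated sub-semigroup of
`ℝ_{≥0}`; `V^{fg}_ν` is its valuation ring, so "coefficients in `V^{fg}_ν`" means
coefficients of nonnegative valuation.  `Kbar` is an algebraic closure, `w` the extension of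
`ν` (which is invariant under `Kfg`-automorphisms of `Kbar`, as holds in this setting).

Let `P(Z) ∈ V^{fg}_ν[Z]` be a monic polynomial of degree `d` with no multiple factor, with
irreducible monic factorization `P = P₁ ⋯ P_r` in `V^{fg}_ν[Z]` and roots `z₁,...,z_d`.
Let `Q(Z) ∈ V^{fg}_ν[Z]` be monic of degree `d` with `min_i ν(aᵢ − bᵢ) ≥ c` for some
`c > d · max_{i≠j} ν(zᵢ − z_j)`.  Then `Q = Q₁ ⋯ Q_r` with each `Qᵢ ∈ V^{fg}_ν[Z]` monic
irreducible and every coefficient of `Qᵢ − Pᵢ` of valuation at least `c/d`. -/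
theorem approximate_polynomial_factors_like
    {Kfg Kbar : Type*} [Field Kfg] [CharZero Kfg] [Field Kbar] [Algebra Kfg Kbar]
    [IsAlgClosure Kfg Kbar]
    (ν : Kfg → ℝ)
    (hν_mul : ∀ x y : Kfg, x ≠ 0 → y ≠ 0 → ν (x * y) = ν x + ν y)
    (hν_add : ∀ x y : Kfg, x ≠ 0 → y ≠ 0 → x + y ≠ 0 → min (ν x) (ν y) ≤ ν (x + y))
    (w : Kbar → ℝ)
    (hw_mul : ∀ x y : Kbar, x ≠ 0 → y ≠ 0 → w (x * y) = w x + w y)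
    (hw_add : ∀ x y : Kbar, x ≠ 0 → y ≠ 0 → x + y ≠ 0 → min (w x) (w y) ≤ w (x + y))
    (hw_ext : ∀ x : Kfg, x ≠ 0 → w (algebraMap Kfg Kbar x) = ν x)
    (hw_aut : ∀ σ : Kbar ≃ₐ[Kfg] Kbar, ∀ z : Kbar, z ≠ 0 → w (σ z) = w z)
    (d r : ℕ) (hd : 0 < d)
    (P Q : Polynomial Kfg)
    (hPmonic : P.Monic) (hPdeg : P.natDegree = d)
    (hPint : ∀ j, P.coeff j = 0 ∨ 0 ≤ ν (P.coeff j))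
    (hPsf : Squarefree P)
    (Pfac : Fin r → Polynomial Kfg)
    (hPfac : P = ∏ i, Pfac i)
    (hPfacm : ∀ i, (Pfac i).Monic ∧ Irreducible (Pfac i) ∧
      ∀ j, (Pfac i).coeff j = 0 ∨ 0 ≤ ν ((Pfac i).coeff j))
    (z : Fin d → Kbar)
    (hroots : P.map (algebraMap Kfg Kbar) = ∏ i, (Polynomial.X - Polynomial.C (z i)))
    (hQmonic : Q.Monic) (hQdeg : Q.natDegree = d)
    (hQint : ∀ j, Q.coeff j = 0 ∨ 0 ≤ ν (Q.coeff j))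
    (c M : ℝ)
    (hM : ∀ i j, i ≠ j → w (z i - z j) ≤ M)
    (hc : (d : ℝ) * M < c)
    (hclose : ∀ j, P.coeff j = Q.coeff j ∨ c ≤ ν (P.coeff j - Q.coeff j)) :
    ∃ Qfac : Fin r → Polynomial Kfg,
      Q = ∏ i, Qfac i ∧
      ∀ i, (Qfac i).Monic ∧ Irreducible (Qfac i) ∧
        (∀ j, (Qfac i).coeff j = 0 ∨ 0 ≤ ν ((Qfac i).coeff j)) ∧
        (∀ j, (Qfac i).coeff j = (Pfac i).coeff j ∨
          c / d ≤ ν ((Qfac i).coeff j - (Pfac i).coeff j)) := by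
  classical
  haveI : IsAlgClosed Kbar := IsAlgClosure.isAlgClosed Kfg
  haveI : Algebra.IsAlgebraic Kfg Kbar := IsAlgClosure.isAlgebraic
  haveI : CharZero Kbar := charZero_of_injective_algebraMap (algebraMap Kfg Kbar).injective
  set A : Kfg →+* Kbar := algebraMap Kfg Kbar with hA
  have hAinj : Function.Injective A := A.injective
  set Pb : Polynomial Kbar := P.map A with hPb
  set Qb : Polynomial Kbar := Q.map A with hQb
  -- transfer of coefficient bounds
  have mapPW : ∀ (b : ℝ) (p : Polynomial Kfg), (∀ j, p.coeff j = 0 ∨ b ≤ ν (p.coeff j)) →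
      PolyWge w b (p.map A) := by
    intro b p hp j
    rw [Polynomial.coeff_map]
    by_cases h0 : p.coeff j = 0
    · exact Or.inl (by rw [h0, map_zero])
    · rcases hp j with h | h
      · exact absurd h h0
      · exact Or.inr (by rw [hw_ext _ h0]; exact h)
  have hPbm : Pb.Monic := hPmonic.map A
  have hQbm : Qb.Monic := hQmonic.map A
  have hPW : PolyWge w 0 Pb := mapPW 0 P hPint
  have hQW : PolyWge w 0 Qb := mapPW 0 Q hQint
  -- evaluation of Pb as a product
  have hPbeval : ∀ x : Kbar, Pb.eval x = ∏ i, (x - z i) := by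
    intro x
    rw [hroots, Polynomial.eval_prod]
    simp
  have hzroot : ∀ i, Pb.eval (z i) = 0 := by
    intro i
    rw [hPbeval]
    exact Finset.prod_eq_zero (Finset.mem_univ i) (sub_self _)
  have hwz : ∀ i, Wge w 0 (z i) := fun i => wge_zero_root w hw_mul hw_add hPbm hPW (hzroot i)
  -- z is injective
  have hPsep : P.Separable := (PerfectField.separable_iff_squarefree).mpr hPsf
  have hzinj : Function.Injective z := by
    have : (∏ i, (Polynomial.X - Polynomial.C (z i))).Separable := hroots ▸ hPsep.map
    exact Polynomial.separable_prod_X_sub_C_iff.mp this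
  -- difference polynomial
  have hDW : PolyWge w c (Qb - Pb) := by
    have hQP : Qb - Pb = (Q - P).map A := by rw [hQb, hPb, Polynomial.map_sub]
    rw [hQP]
    refine mapPW c (Q - P) fun j => ?_
    rcases hclose j with h | h
    · exact Or.inl (by rw [Polynomial.coeff_sub, h, sub_self])
    · right
      rw [Polynomial.coeff_sub]
      have : Q.coeff j - P.coeff j = -(P.coeff j - Q.coeff j) := by ring
      rw [this]
      by_cases h0 : P.coeff j - Q.coeff j = 0
      · rw [h0] at h ⊢
        simpa using h
      · rw [w_neg ν hν_mul h0]; exact h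
  have hQevalz : ∀ i, Wge w c (Qb.eval (z i)) := by
    intro i
    have : Qb.eval (z i) = (Qb - Pb).eval (z i) := by
      rw [Polynomial.eval_sub, hzroot i, sub_zero]
    rw [this]
    exact PolyWge.eval w hw_mul hw_add hDW (hwz i)
  -- roots of Qb
  have hQbsplits : Qb.Splits := IsAlgClosed.splits Qb
  have hQbdeg : Qb.natDegree = d := by rw [hQb, Polynomial.natDegree_map, hQdeg]
  have hQbne : Qb ≠ 0 := hQbm.ne_zero
  have hQbcard : Multiset.card Qb.roots = d := by
    rw [← hQbdeg]
    exact (Polynomial.splits_iff_card_roots.mp hQbsplits)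
  have hQbprod : Qb = (Qb.roots.map fun a => Polynomial.X - Polynomial.C a).prod :=
    hQbsplits.eq_prod_roots_of_monic hQbm
  -- existence of a nearby root of Q for each root of P
  have key1 : ∀ i : Fin d, ∃ y ∈ Qb.roots, VNear w M (z i) y := by
    intro i
    rcases hQevalz i with h0 | hc'
    · exact ⟨z i, Polynomial.mem_roots'.mpr ⟨hQbne, h0⟩, Or.inl rfl⟩
    · have heval : Qb.eval (z i) = (Qb.roots.map fun a => z i - a).prod := by
        conv_lhs => rw [hQbprod]
        rw [Polynomial.eval_multiset_prod, Multiset.map_map]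
        congr 1
        apply Multiset.map_congr rfl
        intro a _
        simp
      by_cases hzero : ∃ a ∈ Qb.roots, z i = a
      · obtain ⟨a, ha, rfl⟩ := hzero
        exact ⟨_, ha, Or.inl rfl⟩
      · push_neg at hzero
        have hne : ∀ a ∈ Qb.roots, z i - a ≠ 0 := fun a ha =>
          sub_ne_zero.mpr (hzero a ha)
        by_contra hcon
        push_neg at hcon
        have hbound : ∀ a ∈ Qb.roots, w (z i - a) ≤ M := by
          intro a ha
          by_contra hgt
          exact (hcon a ha) (Or.inr ⟨hzero a ha, not_le.mp hgt⟩)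
        have hwsum : w (Qb.eval (z i)) = ((Qb.roots.map fun a => z i - a).map w).sum := by
          rw [heval]
          exact w_multiset_prod w hw_mul _ (by
            intro x hx
            obtain ⟨a, ha, rfl⟩ := Multiset.mem_map.mp hx
            exact hne a ha)
        have hsum_le : ((Qb.roots.map fun a => z i - a).map w).sum ≤
            Multiset.card ((Qb.roots.map fun a => z i - a).map w) • M := by
          apply Multiset.sum_le_card_nsmul
          intro x hx
          obtain ⟨x', hx', rfl⟩ := Multiset.mem_map.mp hx
          obtain ⟨a, ha, rfl⟩ := Multiset.mem_map.mp hx'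
          exact hbound a ha
        rw [Multiset.card_map, Multiset.card_map, hQbcard] at hsum_le
        rw [hwsum] at hc'
        have hfin : c ≤ (d : ℝ) * M := by
          calc c ≤ _ := hc'
          _ ≤ d • M := hsum_le
          _ = (d : ℝ) * M := by rw [nsmul_eq_mul]
        linarith
  choose yc hyc_mem hyc_near using key1
  have huniq : ∀ (y : Kbar) (i j : Fin d), VNear w M (z i) y → VNear w M (z j) y → i = j :=
    fun y i j hi hj => vnear_unique w hw_mul hw_add z hzinj hM hi hj
  have hycinj : Function.Injective yc := by
    intro i j h
    exact huniq (yc i) i j (hyc_near i) (h ▸ hyc_near j)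
  -- the roots of Qb are exactly the yc i
  have hroots_eq : Qb.roots = Finset.univ.val.map yc := by
    symm
    apply Multiset.eq_of_le_of_card_le
    · rw [Multiset.le_iff_subset (Multiset.Nodup.map hycinj Finset.univ.nodup)]
      intro x hx
      obtain ⟨i, _, rfl⟩ := Multiset.mem_map.mp hx
      exact hyc_mem i
    · rw [hQbcard, Multiset.card_map]
      simp
  have hQbeq : Qb = ∏ i, (Polynomial.X - Polynomial.C (yc i)) := by
    rw [hQbprod, hroots_eq, Multiset.map_map]
    rfl
  have hQbeval : ∀ x : Kbar, Qb.eval x = ∏ i, (x - yc i) := by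
    intro x
    rw [hQbeq, Polynomial.eval_prod]
    simp
  have hycroot : ∀ i, Qb.eval (yc i) = 0 := by
    intro i
    rw [hQbeval]
    exact Finset.prod_eq_zero (Finset.mem_univ i) (sub_self _)
  have hycW : ∀ i, Wge w 0 (yc i) := fun i => wge_zero_root w hw_mul hw_add hQbm hQW (hycroot i)
  have hzk_ne_ycj : ∀ k j, k ≠ j → z k ≠ yc j := by
    intro k j hkj heq
    exact hkj (huniq (yc j) k j (Or.inl heq) (hyc_near j))
  -- quantitative bound on root displacement
  have hMcd : M < c / d := by
    rw [lt_div_iff₀ (by exact_mod_cast hd)]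
    linarith [hc]
  have hd1 : (1 : ℝ) ≤ d := by exact_mod_cast hd
  have hquant : ∀ k, Wge w (c / d) (z k - yc k) := by
    intro k
    by_cases heq : z k = yc k
    · exact Or.inl (sub_eq_zero.mpr heq)
    right
    have hne : ∀ j, z k - yc j ≠ 0 := by
      intro j
      rcases eq_or_ne k j with rfl | hkj
      · exact sub_ne_zero.mpr heq
      · exact sub_ne_zero.mpr (hzk_ne_ycj k j hkj)
    have hevalne : Qb.eval (z k) ≠ 0 := by
      rw [hQbeval]
      exact Finset.prod_ne_zero_iff.mpr fun j _ => hne j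
    have hcle : c ≤ w (Qb.eval (z k)) := by
      rcases hQevalz k with h0 | h
      · exact absurd h0 hevalne
      · exact h
    have hwsum : w (Qb.eval (z k)) = ∑ j, w (z k - yc j) := by
      rw [hQbeval]
      exact w_finset_prod w hw_mul _ _ fun j _ => hne j
    have hsplit : ∑ j, w (z k - yc j)
        = w (z k - yc k) + ∑ j ∈ Finset.univ.erase k, w (z k - yc j) := by
      rw [← Finset.add_sum_erase _ _ (Finset.mem_univ k)]
    have hothers : ∀ j ∈ Finset.univ.erase k, w (z k - yc j) ≤ M := by
      intro j hj
      have hkj : k ≠ j := fun h => (Finset.mem_erase.mp hj).1 h.symm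
      by_contra hgt
      exact hkj (huniq (yc j) k j (Or.inr ⟨hzk_ne_ycj k j hkj, not_le.mp hgt⟩) (hyc_near j))
    have hsum_others : ∑ j ∈ Finset.univ.erase k, w (z k - yc j) ≤ ((d : ℝ) - 1) * M := by
      have hcard : (Finset.univ.erase k).card = d - 1 := by
        rw [Finset.card_erase_of_mem (Finset.mem_univ k)]
        simp
      calc ∑ j ∈ Finset.univ.erase k, w (z k - yc j)
          ≤ (Finset.univ.erase k).card • M := Finset.sum_le_card_nsmul _ _ M hothers
        _ = ((d - 1 : ℕ) : ℝ) * M := by rw [hcard, nsmul_eq_mul]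
        _ = ((d : ℝ) - 1) * M := by
            congr 1
            have : (1 : ℕ) ≤ d := hd
            push_cast [Nat.cast_sub this]
            ring
    have hlow : c - ((d : ℝ) - 1) * M ≤ w (z k - yc k) := by
      rw [hwsum, hsplit] at hcle
      linarith
    have : c / d ≤ c - ((d : ℝ) - 1) * M := by
      have hd0 : (0 : ℝ) < d := by exact_mod_cast hd
      have h1 : ((d : ℝ) - 1) * (c / d - M) ≥ 0 :=
        mul_nonneg (by linarith) (by linarith [hMcd])
      have h2 : (d : ℝ) * (c / d) = c := by field_simp
      nlinarith [h1, h2]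
    linarith
  -- root sets of the irreducible factors
  set Pfacb : Fin r → Polynomial Kbar := fun i => (Pfac i).map A with hPfacb
  have hPfacbm : ∀ i, (Pfacb i).Monic := fun i => ((hPfacm i).1).map A
  have hPfacb_dvd : ∀ i, Pfacb i ∣ Pb := by
    intro i
    rw [hPb, hPfacb]
    exact Polynomial.map_dvd A (hPfac ▸ Finset.dvd_prod_of_mem Pfac (Finset.mem_univ i))
  have hPbne : Pb ≠ 0 := hPbm.ne_zero
  have hPbroots : Pb.roots = Finset.univ.val.map z := by
    rw [hroots]
    have : ∏ i, (Polynomial.X - Polynomial.C (z i))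
        = ((Finset.univ.val.map z).map fun a => Polynomial.X - Polynomial.C a).prod := by
      rw [Multiset.map_map]; rfl
    rw [this, Polynomial.roots_multiset_prod_X_sub_C]
  have hPfacb_sep : ∀ i, (Pfacb i).Separable := fun i => ((hPfacm i).2.1.separable).map
  have hPfacb_splits : ∀ i, (Pfacb i).Splits := fun i =>
    IsAlgClosed.splits (Pfacb i)
  set S : Fin r → Finset (Fin d) :=
    fun i => Finset.univ.filter (fun k => z k ∈ (Pfacb i).roots) with hS
  have hSroots : ∀ i, (Pfacb i).roots = (S i).val.map z := by
    intro i
    have hnd1 : (Pfacb i).roots.Nodup := Polynomial.nodup_roots (hPfacb_sep i)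
    have hnd2 : ((S i).val.map z).Nodup := Multiset.Nodup.map hzinj (S i).nodup
    rw [Multiset.Nodup.ext hnd1 hnd2]
    intro a
    constructor
    · intro ha
      have haPb : a ∈ Pb.roots := Multiset.subset_of_le
        (Polynomial.roots.le_of_dvd hPbne (hPfacb_dvd i)) ha
      rw [hPbroots] at haPb
      obtain ⟨k, _, rfl⟩ := Multiset.mem_map.mp haPb
      exact Multiset.mem_map.mpr ⟨k, Finset.mem_filter.mpr ⟨Finset.mem_univ k, ha⟩, rfl⟩
    · intro ha
      obtain ⟨k, hk, rfl⟩ := Multiset.mem_map.mp ha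
      exact (Finset.mem_filter.mp (show k ∈ S i from hk)).2
  have hPfacb_eq : ∀ i, Pfacb i = ∏ k ∈ S i, (Polynomial.X - Polynomial.C (z k)) := by
    intro i
    rw [(hPfacb_splits i).eq_prod_roots_of_monic (hPfacbm i),
      hSroots, Multiset.map_map]
    rfl
  have hScard : ∀ i, (S i).card = (Pfac i).natDegree := by
    intro i
    have h1 : Multiset.card (Pfacb i).roots = (Pfacb i).natDegree :=
      Polynomial.splits_iff_card_roots.mp (hPfacb_splits i)
    rw [hSroots] at h1
    rw [Multiset.card_map] at h1
    rw [hPfacb] at h1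
    rw [Polynomial.natDegree_map] at h1
    exact h1
  have hSnonempty : ∀ i, (S i).Nonempty := by
    intro i
    rw [← Finset.card_pos, hScard]
    exact (hPfacm i).2.1.natDegree_pos
  -- each z k is a root of exactly one factor
  have hPfac_ne : ∀ i j : Fin r, i ≠ j → Pfac i ≠ Pfac j := by
    intro i j hij heq
    have hsq : Pfac i * Pfac i ∣ P := by
      rw [hPfac, ← Finset.mul_prod_erase _ _ (Finset.mem_univ i),
        ← Finset.mul_prod_erase _ _ (Finset.mem_erase.mpr ⟨Ne.symm hij, Finset.mem_univ j⟩),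
        ← heq, ← mul_assoc]
      exact Dvd.intro _ rfl
    exact (hPfacm i).2.1.not_isUnit (hPsf _ hsq)
  have hPfac_coprime : ∀ i j : Fin r, i ≠ j → IsCoprime (Pfac i) (Pfac j) := by
    intro i j hij
    rw [Irreducible.coprime_iff_not_dvd (hPfacm i).2.1]
    intro hdvd
    have : Associated (Pfac i) (Pfac j) :=
      Irreducible.associated_of_dvd (hPfacm i).2.1 (hPfacm j).2.1 hdvd
    exact hPfac_ne i j hij (Polynomial.eq_of_monic_of_associated (hPfacm i).1 (hPfacm j).1 this)
  have hSdisj : ∀ i j : Fin r, i ≠ j → Disjoint (S i) (S j) := by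
    intro i j hij
    rw [Finset.disjoint_left]
    intro k hki hkj
    have hri : (Pfacb i).eval (z k) = 0 :=
      Polynomial.isRoot_of_mem_roots (Finset.mem_filter.mp hki).2
    have hrj : (Pfacb j).eval (z k) = 0 :=
      Polynomial.isRoot_of_mem_roots (Finset.mem_filter.mp hkj).2
    obtain ⟨a, b, hab⟩ := (hPfac_coprime i j hij).map (Polynomial.mapRingHom A)
    simp only [Polynomial.coe_mapRingHom] at hab
    have := congrArg (Polynomial.eval (z k)) hab
    simp only [Polynomial.eval_add, Polynomial.eval_mul, Polynomial.eval_one] at this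
    rw [show Polynomial.map A (Pfac i) = Pfacb i from rfl,
      show Polynomial.map A (Pfac j) = Pfacb j from rfl, hri, hrj] at this
    simp at this
  have hSunion : Finset.univ.biUnion S = (Finset.univ : Finset (Fin d)) := by
    apply Finset.eq_univ_of_forall
    intro k
    have : Pb.eval (z k) = 0 := hzroot k
    have hPbfac : Pb = ∏ i, Pfacb i := by
      rw [hPb, hPfac, Polynomial.map_prod]
    rw [hPbfac, Polynomial.eval_prod] at this
    obtain ⟨i, _, hi⟩ := Finset.prod_eq_zero_iff.mp this
    refine Finset.mem_biUnion.mpr ⟨i, Finset.mem_univ i, ?_⟩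
    refine Finset.mem_filter.mpr ⟨Finset.mem_univ k, ?_⟩
    exact Polynomial.mem_roots'.mpr ⟨(hPfacbm i).ne_zero, hi⟩
  -- Krasner's lemma: z k lies in Kfg(yc k)
  have hint : ∀ x : Kbar, IsIntegral Kfg x := fun x =>
    (Algebra.IsAlgebraic.isAlgebraic x).isIntegral
  have haev : ∀ x : Kbar, Pb.eval x = Polynomial.aeval x P := by
    intro x
    rw [hPb, Polynomial.aeval_def, Polynomial.eval_map]
  have haevQ : ∀ x : Kbar, Qb.eval x = Polynomial.aeval x Q := by
    intro x
    rw [hQb, Polynomial.aeval_def, Polynomial.eval_map]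
  have hKrasner : ∀ k : Fin d, z k ∈ Kfg⟮yc k⟯ := by
    intro k
    by_cases heq : z k = yc k
    · rw [heq]
      exact IntermediateField.mem_adjoin_simple_self Kfg (yc k)
    set E := Kfg⟮yc k⟯ with hE
    haveI : Algebra.IsAlgebraic (↥E) Kbar := Algebra.IsAlgebraic.tower_top (K := Kfg) ↥E
    by_contra hnm
    have hzint : IsIntegral (↥E) (z k) := (hint (z k)).tower_top
    have hnrange : z k ∉ (algebraMap ↥E Kbar).range := by
      rintro ⟨⟨a, ha⟩, rfl⟩
      exact hnm ha
    have h2 : 2 ≤ (minpoly ↥E (z k)).natDegree :=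
      (minpoly.two_le_natDegree_iff hzint).mpr hnrange
    set m' := minpoly (↥E) (z k) with hm'
    have hm'sep : m'.Separable := (minpoly.irreducible hzint).separable
    set m'b := m'.map (algebraMap ↥E Kbar) with hm'b
    have hm'bsep : m'b.Separable := hm'sep.map
    have hm'bnodup : m'b.roots.Nodup := Polynomial.nodup_roots hm'bsep
    have hm'bne : m'b ≠ 0 := by
      rw [hm'b, Ne, Polynomial.map_eq_zero]
      exact minpoly.ne_zero hzint
    have hm'bcard : Multiset.card m'b.roots = m'.natDegree := by
      rw [hm'b]
      rw [Polynomial.splits_iff_card_roots.mp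
        (IsAlgClosed.splits (m'.map (algebraMap ↥E Kbar)))]
      exact Polynomial.natDegree_map _
    have hzmem : z k ∈ m'b.roots := by
      rw [Polynomial.mem_roots']
      refine ⟨hm'bne, ?_⟩
      have : Polynomial.aeval (z k) m' = 0 := minpoly.aeval _ _
      rwa [Polynomial.aeval_def, ← Polynomial.eval_map, ← hm'b] at this
    have hcard_erase : 0 < Multiset.card (m'b.roots.erase (z k)) := by
      have h4 : 2 ≤ Multiset.card m'b.roots := by rw [hm'bcard]; exact h2
      rw [Multiset.card_erase_of_mem hzmem, Nat.pred_eq_sub_one]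
      omega
    obtain ⟨z', hz'⟩ := Multiset.card_pos_iff_exists_mem.mp hcard_erase
    have hz'ne : z' ≠ z k := (hm'bnodup.mem_erase_iff.mp hz').1
    have hz'mem : z' ∈ m'b.roots := (hm'bnodup.mem_erase_iff.mp hz').2
    have hz'aev : Polynomial.aeval z' m' = 0 := by
      have := Polynomial.mem_roots'.mp hz'mem
      rw [Polynomial.aeval_def, ← Polynomial.eval_map, ← hm'b]
      exact this.2
    obtain ⟨σ, hσ⟩ := minpoly.exists_algEquiv_of_root'
      (K := ↥E) (L := Kbar) (Algebra.IsAlgebraic.isAlgebraic (z k)) hz'aev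
    set σ' : Kbar ≃ₐ[Kfg] Kbar := σ.restrictScalars Kfg with hσ'def
    have hfix : σ' (yc k) = yc k := by
      have hmem : yc k ∈ E := IntermediateField.mem_adjoin_simple_self Kfg (yc k)
      have : σ' (yc k) = σ (algebraMap ↥E Kbar ⟨yc k, hmem⟩) := rfl
      rw [this, AlgEquiv.commutes]
      rfl
    have hsub : σ' (z k - yc k) = z' - yc k := by
      have hzs : σ' (z k) = z' := hσ
      rw [map_sub, hzs, hfix]
    have hne0 : z k - yc k ≠ 0 := sub_ne_zero.mpr heq
    have hwk : M < w (z k - yc k) := by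
      rcases hyc_near k with h | ⟨_, h⟩
      · exact absurd h heq
      · exact h
    have hwz' : w (z' - yc k) = w (z k - yc k) := by
      rw [← hsub]
      exact hw_aut σ' _ hne0
    have hz'yc : z' - yc k ≠ 0 := by
      rw [← hsub]
      simp only [Ne, map_eq_zero_iff _ σ'.injective]
      exact hne0
    -- z' is a root of Pb, hence equals some z j
    have hz'Pb : Pb.eval z' = 0 := by
      rw [haev, ← hσ]
      have : Polynomial.aeval (σ' (z k)) P = σ' (Polynomial.aeval (z k) P) :=
        Polynomial.aeval_algHom_apply σ' (z k) P
      rw [show σ (z k) = σ' (z k) from rfl, this, ← haev, hzroot k, map_zero]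
    obtain ⟨j, _, hj⟩ := Finset.prod_eq_zero_iff.mp ((hPbeval z').symm ▸ hz'Pb)
    have hzj : z' = z j := by linear_combination hj
    have hjk : j ≠ k := by
      rintro rfl
      exact hz'ne hzj
    have hnear_j : VNear w M (z j) (yc k) := by
      refine Or.inr ⟨?_, ?_⟩
      · rw [← hzj]
        exact fun h => hz'yc (sub_eq_zero.mpr h)
      · rw [← hzj, hwz']
        exact hwk
    have hnear_k : VNear w M (z k) (yc k) := Or.inr ⟨heq, hwk⟩
    exact hjk (huniq (yc k) j k hnear_j hnear_k)
  -- identification of the factors of Q as minimal polynomials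
  set k0 : Fin r → Fin d := fun i => (hSnonempty i).choose with hk0def
  have hk0 : ∀ i, k0 i ∈ S i := fun i => (hSnonempty i).choose_spec
  have haevPfac : ∀ (i : Fin r) (x : Kbar), (Pfacb i).eval x = Polynomial.aeval x (Pfac i) := by
    intro i x
    rw [hPfacb, Polynomial.aeval_def, Polynomial.eval_map]
  have hzrootPfac : ∀ (i : Fin r), ∀ k ∈ S i, Polynomial.aeval (z k) (Pfac i) = 0 := by
    intro i k hk
    rw [← haevPfac]
    exact Polynomial.isRoot_of_mem_roots (Finset.mem_filter.mp hk).2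
  have hkey : ∀ i, (minpoly Kfg (yc (k0 i))).map A
      = ∏ k ∈ S i, (Polynomial.X - Polynomial.C (yc k)) := by
    intro i
    set m := minpoly Kfg (yc (k0 i)) with hm
    set mb := m.map A with hmb
    have hmint : IsIntegral Kfg (yc (k0 i)) := hint _
    have hmmonic : m.Monic := minpoly.monic hmint
    have hmirr : Irreducible m := minpoly.irreducible hmint
    have hmbmonic : mb.Monic := hmmonic.map A
    have hmbsep : mb.Separable := hmirr.separable.map
    have hmbnodup : mb.roots.Nodup := Polynomial.nodup_roots hmbsep
    have hmbsplits : mb.Splits :=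
      IsAlgClosed.splits mb
    have hminz : minpoly Kfg (z (k0 i)) = Pfac i :=
      (minpoly.eq_of_irreducible_of_monic (hPfacm i).2.1 (hzrootPfac i _ (hk0 i))
        (hPfacm i).1).symm
    haveI hEfin : FiniteDimensional Kfg Kfg⟮yc (k0 i)⟯ :=
      IntermediateField.adjoin.finiteDimensional hmint
    have hle : Kfg⟮z (k0 i)⟯ ≤ Kfg⟮yc (k0 i)⟯ := by
      rw [IntermediateField.adjoin_simple_le_iff]
      exact hKrasner (k0 i)
    have hdeg : (Pfac i).natDegree ≤ m.natDegree := by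
      rw [← hminz, ← IntermediateField.adjoin.finrank (hint (z (k0 i))),
        ← IntermediateField.adjoin.finrank hmint]
      exact LinearMap.finrank_le_finrank_of_injective
        (f := (IntermediateField.inclusion hle).toLinearMap)
        (IntermediateField.inclusion hle).injective
    have hmroots : ∀ y' ∈ mb.roots, ∃ k' ∈ S i, y' = yc k' := by
      intro y' hy'
      have hy'aev : Polynomial.aeval y' m = 0 := by
        have := (Polynomial.mem_roots'.mp hy').2
        rwa [Polynomial.aeval_def, ← Polynomial.eval_map, ← hmb]
      obtain ⟨σ, hσ⟩ := minpoly.exists_algEquiv_of_root'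
        (K := Kfg) (L := Kbar) (Algebra.IsAlgebraic.isAlgebraic (yc (k0 i))) hy'aev
      have hσz : Polynomial.aeval (σ (z (k0 i))) (Pfac i) = 0 := by
        rw [Polynomial.aeval_algHom_apply σ (z (k0 i)) (Pfac i),
          hzrootPfac i _ (hk0 i), map_zero]
      have hσzPb : Pb.eval (σ (z (k0 i))) = 0 := by
        rw [haev, Polynomial.aeval_algHom_apply σ (z (k0 i)) P, ← haev, hzroot, map_zero]
      obtain ⟨j, _, hj⟩ := Finset.prod_eq_zero_iff.mp ((hPbeval _).symm ▸ hσzPb)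
      have hzj : σ (z (k0 i)) = z j := by linear_combination hj
      have hjS : j ∈ S i := by
        refine Finset.mem_filter.mpr ⟨Finset.mem_univ j, ?_⟩
        refine Polynomial.mem_roots'.mpr ⟨(hPfacbm i).ne_zero, ?_⟩
        rw [Polynomial.IsRoot.def, haevPfac, ← hzj]
        exact hσz
      have hy'Qb : Qb.eval y' = 0 := by
        rw [← hσ, haevQ, Polynomial.aeval_algHom_apply σ (yc (k0 i)) Q, ← haevQ,
          hycroot, map_zero]
      have hy'mem : y' ∈ Qb.roots := Polynomial.mem_roots'.mpr ⟨hQbne, hy'Qb⟩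
      rw [hroots_eq] at hy'mem
      obtain ⟨k'', _, hk''⟩ := Multiset.mem_map.mp hy'mem
      have hnear : VNear w M (z j) y' := by
        by_cases heq : z (k0 i) = yc (k0 i)
        · left
          rw [← hzj, ← hσ, heq]
        · right
          have hne0 : z (k0 i) - yc (k0 i) ≠ 0 := sub_ne_zero.mpr heq
          have hsub : σ (z (k0 i) - yc (k0 i)) = z j - y' := by
            rw [map_sub, hzj, hσ]
          constructor
          · intro h
            apply hne0
            apply σ.injective
            rw [hsub, map_zero, sub_eq_zero.mpr h]
          · have hwlt : M < w (z (k0 i) - yc (k0 i)) := by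
              rcases hyc_near (k0 i) with h | ⟨_, h⟩
              · exact absurd h heq
              · exact h
            rw [← hsub, hw_aut σ _ hne0]
            exact hwlt
      have : j = k'' := huniq y' j k'' hnear (hk'' ▸ hyc_near k'')
      exact ⟨j, hjS, by rw [← hk'', this]⟩
    have hmb_eq : mb = (mb.roots.map fun a => Polynomial.X - Polynomial.C a).prod :=
      hmbsplits.eq_prod_roots_of_monic hmbmonic
    have hroots_le : mb.roots ≤ (S i).val.map yc := by
      rw [Multiset.le_iff_subset hmbnodup]
      intro y' hy'
      obtain ⟨k', hk', rfl⟩ := hmroots y' hy'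
      exact Multiset.mem_map.mpr ⟨k', hk', rfl⟩
    have hdvd : mb ∣ ∏ k ∈ S i, (Polynomial.X - Polynomial.C (yc k)) := by
      have h1 : ((S i).val.map yc).map (fun a => Polynomial.X - Polynomial.C a)
          = (S i).val.map fun k => Polynomial.X - Polynomial.C (yc k) := by
        rw [Multiset.map_map]; rfl
      have h2 : ∏ k ∈ S i, (Polynomial.X - Polynomial.C (yc k))
          = (((S i).val.map yc).map fun a => Polynomial.X - Polynomial.C a).prod := by
        rw [h1]; rfl
      rw [hmb_eq, h2]
      exact Multiset.prod_dvd_prod_of_le (Multiset.map_le_map hroots_le)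
    have hQfac'monic : (∏ k ∈ S i, (Polynomial.X - Polynomial.C (yc k))).Monic :=
      Polynomial.monic_prod_of_monic _ _ fun k _ => Polynomial.monic_X_sub_C _
    have hQfac'deg : (∏ k ∈ S i, (Polynomial.X - Polynomial.C (yc k))).natDegree
        = (S i).card := by
      rw [Polynomial.natDegree_prod _ _ fun k _ => (Polynomial.monic_X_sub_C (yc k)).ne_zero]
      simp [Polynomial.natDegree_X_sub_C]
    symm
    apply monic_eq_of_dvd_of_natDegree_le hQfac'monic hmbmonic hdvd
    rw [hQfac'deg, hScard i]
    calc (Pfac i).natDegree ≤ m.natDegree := hdeg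
    _ = mb.natDegree := (Polynomial.natDegree_map A).symm
  -- final assembly
  refine ⟨fun i => minpoly Kfg (yc (k0 i)), ?_, ?_⟩
  · apply Polynomial.map_injective A hAinj
    rw [Polynomial.map_prod]
    have h1 : ∀ i ∈ Finset.univ, (minpoly Kfg (yc (k0 i))).map A
        = ∏ k ∈ S i, (Polynomial.X - Polynomial.C (yc k)) := fun i _ => hkey i
    rw [Finset.prod_congr rfl h1, ← Finset.prod_biUnion
      (fun i _ j _ hij => hSdisj i j hij), hSunion]
    rw [← hQb, hQbeq]
  · intro i
    have hmint : IsIntegral Kfg (yc (k0 i)) := hint _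
    have hintcoeff : PolyWge w 0 (∏ k ∈ S i, (Polynomial.X - Polynomial.C (yc k))) :=
      PolyWge.prod0 w hw_mul hw_add _ _ fun k _ => PolyWge.X_sub_C w hw_mul (hycW k)
    have hcoeff_map : ∀ j, A ((minpoly Kfg (yc (k0 i))).coeff j)
        = (∏ k ∈ S i, (Polynomial.X - Polynomial.C (yc k))).coeff j := by
      intro j
      rw [← hkey i, Polynomial.coeff_map]
    refine ⟨minpoly.monic hmint, minpoly.irreducible hmint, ?_, ?_⟩
    · intro j
      by_cases h0 : (minpoly Kfg (yc (k0 i))).coeff j = 0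
      · exact Or.inl h0
      right
      rcases hintcoeff j with h | h
      · exfalso
        apply h0
        apply hAinj
        rw [hcoeff_map j, h, map_zero]
      · rw [← hw_ext _ h0, hcoeff_map j]
        exact h
    · intro j
      set m := minpoly Kfg (yc (k0 i)) with hm
      by_cases h0 : m.coeff j = (Pfac i).coeff j
      · exact Or.inl h0
      right
      have hCnear : ∀ k ∈ S i, PolyWge w (c / d)
          ((Polynomial.X - Polynomial.C (yc k)) - (Polynomial.X - Polynomial.C (z k))) := by
        intro k _
        have heqC : (Polynomial.X - Polynomial.C (yc k)) - (Polynomial.X - Polynomial.C (z k))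
            = Polynomial.C (z k - yc k) := by
          rw [map_sub]
          ring
        rw [heqC]
        intro j'
        rcases Nat.eq_zero_or_pos j' with rfl | hj'
        · rw [Polynomial.coeff_C_zero]
          exact hquant k
        · rw [Polynomial.coeff_C, if_neg hj'.ne']
          exact Or.inl rfl
      have hdiff : PolyWge w (c / d)
          (∏ k ∈ S i, (Polynomial.X - Polynomial.C (yc k))
            - ∏ k ∈ S i, (Polynomial.X - Polynomial.C (z k))) :=
        PolyWge.prod_sub_prod w hw_mul hw_add _ _ _
          (fun k _ => PolyWge.X_sub_C w hw_mul (hycW k))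
          (fun k _ => PolyWge.X_sub_C w hw_mul (hwz k))
          hCnear
      have hdiffne : m.coeff j - (Pfac i).coeff j ≠ 0 := sub_ne_zero.mpr h0
      have hmapdiff : A (m.coeff j - (Pfac i).coeff j)
          = (∏ k ∈ S i, (Polynomial.X - Polynomial.C (yc k))
            - ∏ k ∈ S i, (Polynomial.X - Polynomial.C (z k))).coeff j := by
        rw [Polynomial.coeff_sub, map_sub, hcoeff_map j, ← hPfacb_eq i, hPfacb,
          Polynomial.coeff_map]
      rcases hdiff j with h | h
      · exfalso
        apply hdiffne
        apply hAinj
        rw [hmapdiff, h, map_zero]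
      · rw [← hw_ext _ hdiffne, hmapdiff]
        exact h
end

section
/- Let α, α' ∈ (R_{>0})^n. Every (α)-weighted-homogeneous polynomial in k[x1,...,xn] is (α')-weighted-homogeneous if and only if Rel_α ⊆ Rel_{α'}, where Rel_α is the kernel of the Q-linear map Q^n → R sending q to Σ_i α_i q_i. Moreover, if α' ∈ Rel(α, q, ε) (i.e., Rel_α ⊆ Rel_{α'} and |q − α'_i/α_i| < qε for all i) and a(x) is (α)-homogeneous, then q(1−ε)·ν_α(a) ≤ ν_{α'}(a) ≤ q(1+ε)·ν_α(a). -/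
open scoped BigOperators

/-- `p` is `(α)`-weighted-homogeneous of weight `w`: all exponents of nonzero monomials
of `p` have `α`-weight `w`. -/
def IsWeightedHomog {n : ℕ} {k : Type*} [CommSemiring k] (α : Fin n → ℝ) (w : ℝ)
    (p : MvPolynomial (Fin n) k) : Prop :=
  ∀ d ∈ p.support, ∑ i, α i * (d i : ℝ) = w

/-- `Rel_α`: the kernel of the `ℚ`-linear map `ℚⁿ → ℝ`, `q ↦ Σ αᵢ qᵢ`. -/
def RelSet {n : ℕ} (α : Fin n → ℝ) : Set (Fin n → ℚ) :=
  {q | ∑ i, α i * (q i : ℝ) = 0}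

lemma key_sub {n : ℕ} (β : Fin n → ℝ) (z : Fin n → ℤ) :
    ∑ i, β i * ((z i).toNat : ℝ) - ∑ i, β i * (((-z i).toNat) : ℝ)
      = ∑ i, β i * (z i : ℝ) := by
  rw [← Finset.sum_sub_distrib]
  refine Finset.sum_congr rfl fun i _ => ?_
  have h : (((z i).toNat : ℤ) : ℝ) - (((-z i).toNat : ℤ) : ℝ) = ((z i : ℤ) : ℝ) := by
    rw [← Int.cast_sub, Int.toNat_sub_toNat_neg]
  push_cast at h ⊢
  rw [← mul_sub, h]


/-- **Lemma.**  (1) Every `(α)`-weighted-homogeneous polynomial is `(α')`-weighted-homogeneous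
iff `Rel_α ⊆ Rel_{α'}`.  (2) If moreover `α' ∈ Rel(α,q,ε)` (so `α'` has positive natural
entries, `Rel_α ⊆ Rel_{α'}` and `|q − α'ᵢ/αᵢ| < qε` for all `i`), then for every nonzero
`(α)`-homogeneous polynomial `a` one has `q(1−ε)·ν_α(a) ≤ ν_{α'}(a) ≤ q(1+ε)·ν_α(a)`. -/
theorem rel_homog_iff_and_valuation_bounds (n : ℕ) (k : Type*) [Field k] [CharZero k]
    (α α' : Fin n → ℝ) (hα : ∀ i, 0 < α i) (hα' : ∀ i, 0 < α' i) :
    ((∀ p : MvPolynomial (Fin n) k,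
        (∃ w, IsWeightedHomog α w p) → ∃ w', IsWeightedHomog α' w' p) ↔
      RelSet α ⊆ RelSet α') ∧
    (∀ (q : ℕ) (ε : ℝ), 0 < ε →
      (∀ i, ∃ m : ℕ, 0 < m ∧ α' i = m) →
      RelSet α ⊆ RelSet α' →
      (∀ i, |(q : ℝ) - α' i / α i| < q * ε) →
      ∀ (a : MvPolynomial (Fin n) k) (w w' : ℝ), a ≠ 0 →
        IsWeightedHomog α w a → IsWeightedHomog α' w' a →
        (q : ℝ) * (1 - ε) * w ≤ w' ∧ w' ≤ (q : ℝ) * (1 + ε) * w) := by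
  constructor
  · constructor
    · -- forward: homog transfer implies Rel ⊆ Rel'
      intro h q hq
      set N : ℕ := ∏ i, (q i).den with hNdef
      have hNpos : 0 < N := Finset.prod_pos fun i _ => (q i).pos
      have hz : ∀ i, ∃ z : ℤ, (z : ℚ) = q i * N := by
        intro i
        refine ⟨(q i).num * (N / (q i).den : ℕ), ?_⟩
        have hdvd : (q i).den ∣ N := Finset.dvd_prod_of_mem _ (Finset.mem_univ i)
        have hden : ((q i).den : ℚ) ≠ 0 := Nat.cast_ne_zero.mpr (q i).pos.ne'
        have hcast : ((N / (q i).den : ℕ) : ℚ) = (N : ℚ) / (q i).den :=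
          Nat.cast_div hdvd hden
        rw [Int.cast_mul, Int.cast_natCast, hcast]
        rw [eq_comm]
        conv_lhs => rw [← Rat.num_div_den (q i)]
        field_simp
      choose z hzq using hz
      set A : (Fin n) →₀ ℕ := Finsupp.equivFunOnFinite.symm (fun i => (z i).toNat) with hA
      set B : (Fin n) →₀ ℕ := Finsupp.equivFunOnFinite.symm (fun i => (-z i).toNat) with hB
      have hAi : ∀ i, (A i : ℝ) = ((z i).toNat : ℝ) := by
        intro i; simp [hA]
      have hBi : ∀ i, (B i : ℝ) = (((-z i).toNat) : ℝ) := by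
        intro i; simp [hB]
      -- real sums
      have hzsum : ∀ β : Fin n → ℝ,
          ∑ i, β i * (A i : ℝ) - ∑ i, β i * (B i : ℝ) = ∑ i, β i * (z i : ℝ) := by
        intro β
        simp only [hAi, hBi]
        exact key_sub β z
      have hzr : ∀ i, (z i : ℝ) = (q i : ℝ) * N := by
        intro i
        have := hzq i
        exact_mod_cast congrArg (Rat.cast : ℚ → ℝ) this
      have hzero : ∑ i, α i * (z i : ℝ) = 0 := by
        simp only [hzr]
        have : ∑ i, α i * ((q i : ℝ) * N) = (∑ i, α i * (q i : ℝ)) * N := by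
          rw [Finset.sum_mul]; ring_nf
          exact Finset.sum_congr rfl fun i _ => by ring
        rw [this, hq]
        ring
      set p : MvPolynomial (Fin n) k :=
        MvPolynomial.monomial A 1 + MvPolynomial.monomial B 1 with hp
      have hAs : A ∈ p.support := by
        rw [MvPolynomial.mem_support_iff, hp, MvPolynomial.coeff_add,
          MvPolynomial.coeff_monomial, MvPolynomial.coeff_monomial]
        split_ifs <;> norm_num
      have hBs : B ∈ p.support := by
        rw [MvPolynomial.mem_support_iff, hp, MvPolynomial.coeff_add,
          MvPolynomial.coeff_monomial, MvPolynomial.coeff_monomial]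
        split_ifs <;> norm_num
      have hhom : ∃ w, IsWeightedHomog α w p := by
        refine ⟨∑ i, α i * (A i : ℝ), fun d hd => ?_⟩
        have hsub := MvPolynomial.support_add hd
        rw [Finset.mem_union] at hsub
        have hdAB : d = A ∨ d = B := by
          rcases hsub with h1 | h1
          · left
            have := MvPolynomial.support_monomial_subset h1
            simpa using this
          · right
            have := MvPolynomial.support_monomial_subset h1
            simpa using this
        rcases hdAB with rfl | rfl
        · rfl
        · have := hzsum α
          rw [hzero] at this
          linarith
      obtain ⟨w', hw'⟩ := h p hhom
      have e1 := hw' A hAs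
      have e2 := hw' B hBs
      have hz' : ∑ i, α' i * (z i : ℝ) = 0 := by
        have := hzsum α'
        rw [e1, e2] at this
        linarith
      -- conclude
      show ∑ i, α' i * (q i : ℝ) = 0
      have : ∑ i, α' i * ((q i : ℝ) * N) = 0 := by
        simp only [← hzr]; exact hz'
      have hNne : (N : ℝ) ≠ 0 := Nat.cast_ne_zero.mpr hNpos.ne'
      have h2 : (∑ i, α' i * (q i : ℝ)) * N = 0 := by
        rw [Finset.sum_mul]
        rw [← this]
        refine Finset.sum_congr rfl fun i _ => by ring
      exact (mul_eq_zero.mp h2).resolve_right hNne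
    · -- backward
      intro hrel p ⟨w, hpw⟩
      by_cases hs : p.support.Nonempty
      · obtain ⟨d0, hd0⟩ := hs
        refine ⟨∑ i, α' i * (d0 i : ℝ), fun d hd => ?_⟩
        have hv : (fun i => (d i : ℚ) - (d0 i : ℚ)) ∈ RelSet α := by
          show ∑ i, α i * (((d i : ℚ) - (d0 i : ℚ) : ℚ) : ℝ) = 0
          push_cast
          have : ∑ i, α i * ((d i : ℝ) - (d0 i : ℝ))
              = ∑ i, α i * (d i : ℝ) - ∑ i, α i * (d0 i : ℝ) := by
            rw [← Finset.sum_sub_distrib]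
            exact Finset.sum_congr rfl fun i _ => by ring
          rw [this, hpw d hd, hpw d0 hd0, sub_self]
        have hv' := hrel hv
        have : ∑ i, α' i * (((d i : ℚ) - (d0 i : ℚ) : ℚ) : ℝ) = 0 := hv'
        push_cast at this
        have h2 : ∑ i, α' i * ((d i : ℝ) - (d0 i : ℝ))
            = ∑ i, α' i * (d i : ℝ) - ∑ i, α' i * (d0 i : ℝ) := by
          rw [← Finset.sum_sub_distrib]
          exact Finset.sum_congr rfl fun i _ => by ring
        rw [h2] at this
        linarith
      · exact ⟨0, fun d hd => absurd ⟨d, hd⟩ hs⟩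
  · intro q ε hε hnat hrel hclose a w w' ha hwa hw'a
    obtain ⟨d, hd⟩ := (MvPolynomial.support_nonempty).mpr ha
    have hw : w = ∑ i, α i * (d i : ℝ) := (hwa d hd).symm
    have hw' : w' = ∑ i, α' i * (d i : ℝ) := (hw'a d hd).symm
    have hlow : ∀ i, (q : ℝ) * (1 - ε) * α i ≤ α' i := by
      intro i
      have h := hclose i
      rw [abs_lt] at h
      have h2 : (q : ℝ) * (1 - ε) < α' i / α i := by nlinarith [h.2]
      have := (lt_div_iff₀ (hα i)).mp h2
      linarith
    have hhigh : ∀ i, α' i ≤ (q : ℝ) * (1 + ε) * α i := by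
      intro i
      have h := hclose i
      rw [abs_lt] at h
      have h2 : α' i / α i < (q : ℝ) * (1 + ε) := by nlinarith [h.1]
      have := (div_lt_iff₀ (hα i)).mp h2
      linarith
    constructor
    · rw [hw, hw', Finset.mul_sum]
      refine Finset.sum_le_sum fun i _ => ?_
      have : (q : ℝ) * (1 - ε) * (α i * (d i : ℝ)) = ((q : ℝ) * (1 - ε) * α i) * (d i : ℝ) := by
        ring
      rw [this]
      exact mul_le_mul_of_nonneg_right (hlow i) (Nat.cast_nonneg _)
    · rw [hw, hw', Finset.mul_sum]
      refine Finset.sum_le_sum fun i _ => ?_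
      have : (q : ℝ) * (1 + ε) * (α i * (d i : ℝ)) = ((q : ℝ) * (1 + ε) * α i) * (d i : ℝ) := by
        ring
      rw [this]
      exact mul_le_mul_of_nonneg_right (hhigh i) (Nat.cast_nonneg _)
end

section
/- Let α ∈ N^n and θ ∈ C[x1,...,xn] an (α)-weighted homogeneous polynomial of degree d = ν_α(θ). Then there exists a constant C' > 0 such that |θ(x)| ≥ C' · d_α(x, θ^{-1}(0))^d for all x ∈ C^n, where d_α(x, y) = max_i inf_{ξ^{α_i}=1} |x_i^{1/α_i} − ξ y_i^{1/α_i}| and d_α(x, θ^{-1}(0)) = inf over zeros of θ. -/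
open scoped BigOperators

/-- `rootDist m a b = inf_{ξ^m = 1} |a^(1/m) − ξ b^(1/m)|`, realised as the infimum of
`|u − w|` over all `m`-th roots `u` of `a` and `w` of `b` (which is the same quantity). -/
noncomputable def rootDist (m : ℕ) (a b : ℂ) : ℝ :=
  sInf {r : ℝ | ∃ u w : ℂ, u ^ m = a ∧ w ^ m = b ∧ r = ‖u - w‖}

/-- The weighted distance `d_α(x,y) = max_i inf_{ξ^{α_i}=1} |x_i^{1/α_i} − ξ y_i^{1/α_i}|`. -/
noncomputable def weightedDist {n : ℕ} (α : Fin n → ℕ) (x y : Fin n → ℂ) : ℝ :=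
  ⨆ i, rootDist (α i) (x i) (y i)

/-- `d_α(x, θ⁻¹(0))`: the weighted distance from `x` to the zero set of `θ`. -/
noncomputable def weightedDistToZeros {n : ℕ} (α : Fin n → ℕ)
    (θ : MvPolynomial (Fin n) ℂ) (x : Fin n → ℂ) : ℝ :=
  sInf {r : ℝ | ∃ y : Fin n → ℂ, MvPolynomial.eval y θ = 0 ∧ r = weightedDist α x y}

lemma rootDist_nonneg (m : ℕ) (a b : ℂ) : 0 ≤ rootDist m a b := by
  apply Real.sInf_nonneg
  rintro r ⟨u, w, -, -, rfl⟩
  exact norm_nonneg _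

lemma rootDist_le (m : ℕ) (a b u w : ℂ) (hu : u ^ m = a) (hw : w ^ m = b) :
    rootDist m a b ≤ norm (u - w) := by
  apply csInf_le
  · refine ⟨0, ?_⟩
    rintro r ⟨u', w', -, -, rfl⟩
    exact norm_nonneg _
  · exact ⟨u, w, hu, hw, rfl⟩

lemma weightedDist_nonneg {n : ℕ} (α : Fin n → ℕ) (x y : Fin n → ℂ) :
    0 ≤ weightedDist α x y :=
  Real.iSup_nonneg fun i => rootDist_nonneg _ _ _

lemma weightedDistToZeros_nonneg {n : ℕ} (α : Fin n → ℕ)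
    (θ : MvPolynomial (Fin n) ℂ) (x : Fin n → ℂ) :
    0 ≤ weightedDistToZeros α θ x := by
  apply Real.sInf_nonneg
  rintro r ⟨y, -, rfl⟩
  exact weightedDist_nonneg _ _ _

lemma weightedDistToZeros_le {n : ℕ} (α : Fin n → ℕ)
    (θ : MvPolynomial (Fin n) ℂ) (x y : Fin n → ℂ) (hy : MvPolynomial.eval y θ = 0) :
    weightedDistToZeros α θ x ≤ weightedDist α x y := by
  apply csInf_le
  · refine ⟨0, ?_⟩
    rintro r ⟨y', -, rfl⟩
    exact weightedDist_nonneg _ _ _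
  · exact ⟨y, hy, rfl⟩

lemma pow_card_le_prod_abs (s : Multiset ℂ) (c : ℝ) (hc : 0 ≤ c)
    (h : ∀ x ∈ s, c ≤ norm x) :
    c ^ (Multiset.card s) ≤ (s.map norm).prod := by
  induction s using Multiset.induction with
  | empty => simp
  | cons a s ih =>
    simp only [Multiset.map_cons, Multiset.prod_cons, Multiset.card_cons, pow_succ']
    exact mul_le_mul (h a (Multiset.mem_cons_self a s))
      (ih fun x hx => h x (Multiset.mem_cons_of_mem hx)) (pow_nonneg hc _)
      (norm_nonneg a)

/-- For a complex polynomial of positive degree, at any point there is a root whose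
distance to the point is controlled by the value of the polynomial. -/
lemma exists_root_close (P : Polynomial ℂ) (hd : 1 ≤ P.natDegree) (t : ℂ) :
    ∃ r : ℂ, P.IsRoot r ∧
      norm P.leadingCoeff * norm (t - r) ^ P.natDegree
        ≤ norm (P.eval t) := by
  have hP : P ≠ 0 := fun h => by simp [h] at hd
  have hsplit : P.Splits := IsAlgClosed.splits P
  have hcard : Multiset.card P.roots = P.natDegree :=
    (Polynomial.splits_iff_card_roots).mp hsplit
  have hne : P.roots ≠ 0 := by
    intro h
    rw [h] at hcard
    simp at hcard
    omega
  have hFne : P.roots.toFinset.Nonempty := by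
    obtain ⟨r, hr⟩ := Multiset.exists_mem_of_ne_zero hne
    exact ⟨r, Multiset.mem_toFinset.mpr hr⟩
  obtain ⟨r₀, hr₀mem, hr₀min⟩ :=
    P.roots.toFinset.exists_min_image (fun r => norm (t - r)) hFne
  refine ⟨r₀, Polynomial.isRoot_of_mem_roots (Multiset.mem_toFinset.mp hr₀mem), ?_⟩
  have hfact := (Polynomial.C_leadingCoeff_mul_prod_multiset_X_sub_C hcard).symm
  have heval : P.eval t = P.leadingCoeff * ((P.roots.map fun a => t - a).prod) := by
    conv_lhs => rw [hfact]
    rw [Polynomial.eval_mul, Polynomial.eval_C, Polynomial.eval_multiset_prod]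
    congr 2
    rw [Multiset.map_map]
    congr 1
    funext a
    simp
  rw [heval, norm_mul]
  apply mul_le_mul_of_nonneg_left _ (norm_nonneg _)
  have habs : norm ((P.roots.map fun a => t - a).prod)
      = ((P.roots.map fun a => t - a).map norm).prod :=
    map_multiset_prod (normHom : ℂ →*₀ ℝ) _
  rw [habs]
  have hcard2 : Multiset.card (P.roots.map fun a => t - a) = P.natDegree := by
    rw [Multiset.card_map, hcard]
  rw [← hcard2]
  apply pow_card_le_prod_abs
  · exact norm_nonneg _
  · intro x hx
    obtain ⟨a, ha, rfl⟩ := Multiset.mem_map.mp hx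
    exact hr₀min a (Multiset.mem_toFinset.mpr ha)

lemma coeff_prod_varying {ι : Type*} (s : Finset ι) (f : ι → Polynomial ℂ) (k : ι → ℕ)
    (h : ∀ i ∈ s, (f i).natDegree ≤ k i) :
    (∏ i ∈ s, f i).coeff (∑ i ∈ s, k i) = ∏ i ∈ s, (f i).coeff (k i) := by
  classical
  induction s using Finset.cons_induction with
  | empty => simp
  | cons a s ha ih =>
    rw [Finset.prod_cons, Finset.sum_cons, Finset.prod_cons,
      Polynomial.coeff_mul_add_eq_of_natDegree_le (h a (Finset.mem_cons_self a s))
        ((Polynomial.natDegree_prod_le s f).trans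
          (Finset.sum_le_sum fun i hi => h i (Finset.mem_cons_of_mem hi))),
      ih fun i hi => h i (Finset.mem_cons_of_mem hi)]

/-- **Łojasiewicz-type inequality for weighted homogeneous polynomials.**
If `θ ∈ ℂ[x₁,...,xₙ]` is `(α)`-weighted-homogeneous of degree `d = ν_α(θ)` for weights
`α ∈ ℕⁿ`, then there is `C' > 0` with `|θ(x)| ≥ C' · d_α(x, θ⁻¹(0))^d` for all `x ∈ ℂⁿ`. -/
theorem weighted_homog_lower_bound (n : ℕ) (α : Fin n → ℕ) (hα : ∀ i, 0 < α i)
    (θ : MvPolynomial (Fin n) ℂ) (hθ0 : θ ≠ 0) (d : ℕ)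
    (hθ : ∀ m ∈ θ.support, ∑ i, α i * m i = d) :
    ∃ C' : ℝ, 0 < C' ∧ ∀ x : Fin n → ℂ,
      C' * (weightedDistToZeros α θ x) ^ d ≤ ‖MvPolynomial.eval x θ‖ := by
  classical
  rcases Nat.eq_zero_or_pos d with hd0 | hdpos
  · -- degree 0: θ is a nonzero constant
    subst hd0
    have hsupp : θ.support = {0} := by
      have hsub : θ.support ⊆ {0} := by
        intro m hm
        have := hθ m hm
        have hm0 : ∀ i, m i = 0 := by
          intro i
          have h1 : α i * m i = 0 := by
            by_contra h
            have : 0 < ∑ j, α j * m j :=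
              Finset.sum_pos' (fun j _ => Nat.zero_le _)
                ⟨i, Finset.mem_univ i, Nat.pos_of_ne_zero h⟩
            omega
          have h2 := (hα i).ne'
          rcases Nat.mul_eq_zero.mp h1 with h | h
          · omega
          · exact h
        simp only [Finset.mem_singleton]
        ext i
        simp [hm0 i]
      have hne : θ.support.Nonempty := MvPolynomial.support_nonempty.mpr hθ0
      obtain ⟨m, hm⟩ := hne
      have hm' : m = 0 := Finset.mem_singleton.mp (hsub hm)
      exact Finset.Subset.antisymm hsub (Finset.singleton_subset_iff.mpr (hm' ▸ hm))
    have hc : MvPolynomial.coeff 0 θ ≠ 0 := by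
      intro h
      apply hθ0
      have : (0 : Fin n →₀ ℕ) ∉ θ.support := by simp [MvPolynomial.mem_support_iff, h]
      rw [hsupp] at this
      simp at this
    refine ⟨norm (MvPolynomial.coeff 0 θ), norm_pos_iff.mpr hc, fun x => ?_⟩
    rw [pow_zero, mul_one]
    have heval : MvPolynomial.eval x θ = MvPolynomial.coeff 0 θ := by
      rw [MvPolynomial.eval_eq, hsupp]
      simp
    rw [heval]
  · -- positive degree
    obtain ⟨z, hz⟩ : ∃ z : Fin n → ℂ, MvPolynomial.eval z θ ≠ 0 := by
      by_contra h
      push_neg at h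
      exact hθ0 (MvPolynomial.funext fun x => by simp [h x])
    choose v hv using fun i => IsAlgClosed.exists_pow_nat_eq (z i) (hα i)
    set τv : ℂ := MvPolynomial.eval z θ with hτv
    set V : ℝ := 1 + ∑ i, norm (v i) with hVdef
    have hV1 : (1 : ℝ) ≤ V :=
      le_add_of_nonneg_right (Finset.sum_nonneg fun i _ => norm_nonneg _)
    have hV0 : (0 : ℝ) < V := lt_of_lt_of_le one_pos hV1
    have hVi : ∀ i, norm (v i) ≤ V := by
      intro i
      calc norm (v i) ≤ ∑ j, norm (v j) :=
            Finset.single_le_sum (fun j _ => norm_nonneg (v j)) (Finset.mem_univ i)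
        _ ≤ V := by rw [hVdef]; linarith
    refine ⟨norm τv / V ^ d,
      div_pos (norm_pos_iff.mpr hz) (pow_pos hV0 d), fun x => ?_⟩
    choose y hy using fun i => IsAlgClosed.exists_pow_nat_eq (x i) (hα i)
    set L : Fin n → Polynomial ℂ :=
      fun i => Polynomial.C (y i) + Polynomial.C (v i) * Polynomial.X with hLdef
    have hLdeg : ∀ i, (L i).natDegree ≤ 1 := by
      intro i
      apply Polynomial.natDegree_add_le_of_degree_le
      · simp
      · exact (Polynomial.natDegree_C_mul_le _ _).trans (by simp)
    have hLcoeff : ∀ i, (L i).coeff 1 = v i := by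
      intro i
      simp [hLdef, Polynomial.coeff_C]
    set P : Polynomial ℂ := MvPolynomial.aeval (fun i => (L i) ^ α i) θ with hPdef
    have hevalP : ∀ t : ℂ,
        P.eval t = MvPolynomial.eval (fun i => (y i + v i * t) ^ α i) θ := by
      intro t
      have h1 := MvPolynomial.comp_aeval_apply
        (f := fun i => (L i) ^ α i) (Polynomial.aeval t) θ
      rw [hPdef, ← Polynomial.coe_aeval_eq_eval, h1]
      have h2 : (fun i => Polynomial.aeval t ((L i) ^ α i))
          = fun i => ((y i + v i * t : ℂ)) ^ α i := by
        funext i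
        simp [hLdef]
      rw [h2, ← MvPolynomial.coe_aeval_eq_eval]
      rfl
    have hPsum : P = ∑ m ∈ θ.support,
        Polynomial.C (MvPolynomial.coeff m θ) * ∏ i, (L i) ^ (α i * m i) := by
      rw [hPdef, MvPolynomial.aeval_def, MvPolynomial.eval₂_eq']
      apply Finset.sum_congr rfl
      intro m hm
      rw [Polynomial.algebraMap_eq]
      congr 1
      apply Finset.prod_congr rfl
      intro i _
      rw [← pow_mul]
    have hterm_deg : ∀ m ∈ θ.support, (∏ i, (L i) ^ (α i * m i)).natDegree ≤ d := by
      intro m hm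
      calc (∏ i, (L i) ^ (α i * m i)).natDegree
          ≤ ∑ i, ((L i) ^ (α i * m i)).natDegree := Polynomial.natDegree_prod_le _ _
        _ ≤ ∑ i, α i * m i := Finset.sum_le_sum fun i _ =>
            (Polynomial.natDegree_pow_le).trans
              (by nlinarith [hLdeg i, Nat.zero_le (α i * m i)])
        _ = d := hθ m hm
    have hterm_coeff : ∀ m ∈ θ.support,
        (∏ i, (L i) ^ (α i * m i)).coeff d = ∏ i, (v i) ^ (α i * m i) := by
      intro m hm
      rw [← hθ m hm]
      rw [coeff_prod_varying Finset.univ _ (fun i => α i * m i)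
        (fun i _ => (Polynomial.natDegree_pow_le).trans
          (by nlinarith [hLdeg i, Nat.zero_le (α i * m i)]))]
      apply Finset.prod_congr rfl
      intro i _
      have hc := Polynomial.coeff_pow_of_natDegree_le (m := α i * m i) (hLdeg i)
      simpa [hLcoeff i] using hc
    have hcoeffd : P.coeff d = τv := by
      rw [hPsum, Polynomial.finset_sum_coeff]
      have : ∀ m ∈ θ.support,
          (Polynomial.C (MvPolynomial.coeff m θ) * ∏ i, (L i) ^ (α i * m i)).coeff d
            = MvPolynomial.coeff m θ * ∏ i, (v i) ^ (α i * m i) := by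
        intro m hm
        rw [Polynomial.coeff_C_mul, hterm_coeff m hm]
      rw [Finset.sum_congr rfl this, hτv, MvPolynomial.eval_eq']
      apply Finset.sum_congr rfl
      intro m hm
      congr 1
      apply Finset.prod_congr rfl
      intro i _
      rw [← hv i, ← pow_mul]
    have hPdegle : P.natDegree ≤ d := by
      rw [hPsum]
      apply Polynomial.natDegree_sum_le_of_forall_le
      intro m hm
      calc (Polynomial.C (MvPolynomial.coeff m θ) * ∏ i, (L i) ^ (α i * m i)).natDegree
          ≤ (Polynomial.C (MvPolynomial.coeff m θ)).natDegree
            + (∏ i, (L i) ^ (α i * m i)).natDegree := Polynomial.natDegree_mul_le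
        _ ≤ 0 + d := add_le_add (by simp) (hterm_deg m hm)
        _ = d := by ring
    have hPcne : P.coeff d ≠ 0 := by rw [hcoeffd]; exact hz
    have hPdeg : P.natDegree = d :=
      le_antisymm hPdegle (Polynomial.le_natDegree_of_ne_zero hPcne)
    have hlead : P.leadingCoeff = τv := by
      rw [Polynomial.leadingCoeff, hPdeg, hcoeffd]
    obtain ⟨t₀, ht₀root, ht₀⟩ := exists_root_close P (hPdeg ▸ hdpos) 0
    rw [hPdeg, hlead] at ht₀
    set xstar : Fin n → ℂ := fun i => (y i + v i * t₀) ^ α i with hxstardef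
    have hxstar0 : MvPolynomial.eval xstar θ = 0 := by
      rw [hxstardef, ← hevalP]
      exact ht₀root
    have hP0 : P.eval 0 = MvPolynomial.eval x θ := by
      rw [hevalP]
      have hx' : (fun i => (y i + v i * 0) ^ α i) = x := by
        funext i
        simp [hy i]
      rw [hx']
    have hwd : weightedDist α x xstar ≤ norm t₀ * V := by
      apply Real.iSup_le _ (mul_nonneg (norm_nonneg _) hV0.le)
      intro i
      calc rootDist (α i) (x i) (xstar i)
          ≤ norm (y i - (y i + v i * t₀)) := rootDist_le _ _ _ _ _ (hy i) rfl
        _ = norm t₀ * norm (v i) := by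
            rw [show y i - (y i + v i * t₀) = -(v i * t₀) by ring, norm_neg, norm_mul]
            ring
        _ ≤ norm t₀ * V :=
            mul_le_mul_of_nonneg_left (hVi i) (norm_nonneg _)
    have hDle : weightedDistToZeros α θ x ≤ norm t₀ * V :=
      (weightedDistToZeros_le α θ x xstar hxstar0).trans hwd
    have hD0 : 0 ≤ weightedDistToZeros α θ x := weightedDistToZeros_nonneg α θ x
    calc norm τv / V ^ d * (weightedDistToZeros α θ x) ^ d
        ≤ norm τv / V ^ d * (norm t₀ * V) ^ d := by
          apply mul_le_mul_of_nonneg_left (pow_le_pow_left₀ hD0 hDle d)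
          positivity
      _ = norm τv * norm t₀ ^ d := by
          rw [mul_pow]
          field_simp
      _ = norm τv * norm (0 - t₀) ^ d := by rw [zero_sub, norm_neg]
      _ ≤ norm (P.eval 0) := ht₀
      _ = norm (MvPolynomial.eval x θ) := by rw [hP0]
end

section
/- Let k → k' be a field extension of characteristic zero and f ∈ k'[[x1,...,xn]] a power series algebraic over k[[x1,...,xn]]. Then the subfield of k' generated over k by all coefficients of f is a finite extension of k. -/
set_option maxHeartbeats 1000000

open Polynomial MvPowerSeries

namespace CutAux

noncomputable section

/-! ### A transcendental weight function on exponents -/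

def LL : ℝ := liouvilleNumber 3

lemma LL_trans : Transcendental ℤ LL := transcendental_liouvilleNumber (by norm_num)

lemma LL_pos : 0 < LL := by
  have hs : Summable fun i : ℕ => 1 / (3:ℝ) ^ (Nat.factorial i) :=
    LiouvilleNumber.summable (by norm_num)
  have := Summable.tsum_pos hs (fun i => by positivity) 0 (by norm_num)
  simpa [LL, liouvilleNumber] using this

variable {n : ℕ}

def w (d : Fin n →₀ ℕ) : ℝ := ∑ i, (d i : ℝ) * LL ^ (i.1 + 1)

lemma w_nonneg (d : Fin n →₀ ℕ) : 0 ≤ w d :=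
  Finset.sum_nonneg fun i _ => mul_nonneg (by positivity) (le_of_lt (pow_pos LL_pos _))

lemma w_add (a b : Fin n →₀ ℕ) : w (a + b) = w a + w b := by
  simp [w, Finsupp.add_apply, add_mul, Finset.sum_add_distrib]

lemma w_zero : w (0 : Fin n →₀ ℕ) = 0 := by simp [w]

lemma w_smul (j : ℕ) (a : Fin n →₀ ℕ) : w (j • a) = j * w a := by
  induction j with
  | zero => simp [w_zero]
  | succ m ih => rw [succ_nsmul, w_add, ih]; push_cast; ring

lemma w_inj : Function.Injective (w (n := n)) := by
  intro a b hab
  by_contra hne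
  apply LL_trans
  refine ⟨∑ i : Fin n, Polynomial.C ((a i : ℤ) - (b i : ℤ)) * Polynomial.X ^ (i.1 + 1), ?_, ?_⟩
  · obtain ⟨i0, hi0⟩ : ∃ i, a i ≠ b i := by
      by_contra h; push_neg at h; exact hne (Finsupp.ext h)
    intro hp0
    have h2 := congrArg (fun q => Polynomial.coeff q (i0.1 + 1)) hp0
    simp only [finset_sum_coeff, Polynomial.coeff_C_mul, Polynomial.coeff_X_pow,
      Polynomial.coeff_zero] at h2
    rw [Finset.sum_eq_single i0] at h2
    · simp at h2
      omega
    · intro i _ hi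
      rw [if_neg, mul_zero]
      exact fun h => hi (Fin.val_injective (by omega))
    · simp
  · rw [map_sum]
    have key : ∀ i : Fin n, (Polynomial.aeval LL)
        (Polynomial.C ((a i : ℤ) - (b i : ℤ)) * Polynomial.X ^ (i.1 + 1))
        = ((a i : ℝ) - (b i : ℝ)) * LL ^ (i.1 + 1) := by
      intro i
      simp only [map_mul, map_pow, aeval_C, aeval_X]
      push_cast
      ring
    rw [Finset.sum_congr rfl fun i _ => key i]
    simp only [sub_mul, Finset.sum_sub_distrib]
    rw [show (∑ i : Fin n, (a i : ℝ) * LL ^ (i.1+1)) = w a from rfl,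
        show (∑ i : Fin n, (b i : ℝ) * LL ^ (i.1+1)) = w b from rfl, hab, sub_self]

lemma w_le_finite (Cb : ℝ) : {d : Fin n →₀ ℕ | w d ≤ Cb}.Finite := by
  have key : {d : Fin n →₀ ℕ | w d ≤ Cb} ⊆
      Set.Iic (Finsupp.equivFunOnFinite.symm (fun i : Fin n => ⌈Cb / LL ^ (i.1+1)⌉₊)) := by
    intro d hd
    rw [Set.mem_Iic, Finsupp.le_def]
    intro i
    have h1 : (d i : ℝ) * LL ^ (i.1+1) ≤ Cb := by
      refine le_trans ?_ hd
      exact Finset.single_le_sum (f := fun j : Fin n => (d j : ℝ) * LL ^ (j.1+1))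
        (fun j _ => mul_nonneg (by positivity) (le_of_lt (pow_pos LL_pos _)))
        (Finset.mem_univ i)
    have h2 : (d i : ℝ) ≤ Cb / LL ^ (i.1+1) := by
      rw [le_div_iff₀ (pow_pos LL_pos _)]; exact h1
    have h3 : (d i : ℝ) ≤ (⌈Cb / LL ^ (i.1+1)⌉₊ : ℝ) := le_trans h2 (Nat.le_ceil _)
    simpa using (Nat.cast_le (α := ℝ)).mp h3
  exact Set.Finite.subset (Set.finite_Iic _) key

lemma w_lt_finite (Cb : ℝ) : {d : Fin n →₀ ℕ | w d < Cb}.Finite :=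
  (w_le_finite Cb).subset fun e (he : w e < Cb) => (le_of_lt he : w e ≤ Cb)

def rk (d : Fin n →₀ ℕ) : ℕ := (w_lt_finite (n := n) (w d)).toFinset.card

lemma rk_lt {e d : Fin n →₀ ℕ} (h : w e < w d) : rk e < rk d := by
  apply Finset.card_lt_card
  rw [Finset.ssubset_iff_of_subset]
  · refine ⟨e, ?_, ?_⟩
    · simp only [Set.Finite.mem_toFinset, Set.mem_setOf_eq]; exact h
    · simp only [Set.Finite.mem_toFinset, Set.mem_setOf_eq]; exact lt_irrefl _
  · intro x hx
    simp only [Set.Finite.mem_toFinset, Set.mem_setOf_eq] at hx ⊢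
    exact lt_trans hx h

lemma w_induction {P : (Fin n →₀ ℕ) → Prop}
    (ih : ∀ d, (∀ e, w e < w d → P e) → P d) : ∀ d, P d := by
  have key : ∀ m : ℕ, ∀ d, rk d < m → P d := by
    intro m
    induction m with
    | zero => exact fun d hd => absurd hd (Nat.not_lt_zero _)
    | succ m ihm =>
      intro d hd
      exact ih d fun e he => ihm e (lt_of_lt_of_le (rk_lt he) (Nat.lt_succ_iff.mp hd))
  exact fun d => key (rk d + 1) d (Nat.lt_succ_self _)

/-! ### Weight-support predicates on multivariate power series -/

section ring

variable {k' : Type*} [CommRing k']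

def Hw (s : ℝ) (u : MvPowerSeries (Fin n) k') : Prop := ∀ d, w d < s → coeff d u = 0

def SuppGt (t : ℝ) (u : MvPowerSeries (Fin n) k') : Prop := ∀ d, w d ≤ t → coeff d u = 0

lemma Hw_mono {s t : ℝ} (h : t ≤ s) {u : MvPowerSeries (Fin n) k'} (hu : Hw s u) : Hw t u :=
  fun d hd => hu d (lt_of_lt_of_le hd h)

lemma Hw_nonpos {s : ℝ} (hs : s ≤ 0) (u : MvPowerSeries (Fin n) k') : Hw s u :=
  fun d hd => absurd (lt_of_lt_of_le hd hs) (not_lt.mpr (w_nonneg d))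

lemma Hw_sum {s : ℝ} {ι : Type*} (T : Finset ι) (F : ι → MvPowerSeries (Fin n) k')
    (h : ∀ i ∈ T, Hw s (F i)) : Hw s (∑ i ∈ T, F i) := fun d hd => by
  rw [map_sum]
  exact Finset.sum_eq_zero fun i hi => h i hi d hd

lemma Hw_mul {s t : ℝ} {u v : MvPowerSeries (Fin n) k'} (hu : Hw s u) (hv : Hw t v) :
    Hw (s + t) (u * v) := by
  classical
  intro d hd
  rw [MvPowerSeries.coeff_mul]
  apply Finset.sum_eq_zero
  rintro ⟨a, b⟩ hab
  rw [Finset.HasAntidiagonal.mem_antidiagonal] at hab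
  have hw : w a + w b < s + t := by rw [← w_add, hab]; exact hd
  rcases lt_or_ge (w a) s with h1 | h1
  · rw [hu a h1, zero_mul]
  · rw [hv b (by linarith), mul_zero]

lemma Hw_pow {s : ℝ} (hs : 0 ≤ s) {u : MvPowerSeries (Fin n) k'} (hu : Hw s u) (j : ℕ) :
    Hw (j * s) (u ^ j) := by
  induction j with
  | zero => simpa using Hw_nonpos le_rfl 1
  | succ m ih =>
    rw [pow_succ]
    have h2 := Hw_mul ih hu
    have h3 : ((m + 1 : ℕ) : ℝ) * s = (m : ℝ) * s + s := by push_cast; ring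
    rw [h3]
    exact h2

lemma coeff_mul_exact {a b : Fin n →₀ ℕ} {u v : MvPowerSeries (Fin n) k'}
    (hu : Hw (w a) u) (hv : Hw (w b) v) :
    coeff (a + b) (u * v) = coeff a u * coeff b v := by
  classical
  rw [MvPowerSeries.coeff_mul]
  refine Finset.sum_eq_single_of_mem (a, b) (Finset.HasAntidiagonal.mem_antidiagonal.mpr rfl) ?_
  rintro ⟨a', b'⟩ hab hne
  rw [Finset.HasAntidiagonal.mem_antidiagonal] at hab
  have hsum : w a' + w b' = w a + w b := by rw [← w_add, ← w_add, hab]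
  rcases lt_trichotomy (w a') (w a) with h1 | h1 | h1
  · rw [hu a' h1, zero_mul]
  · have ha : a' = a := w_inj h1
    subst ha
    have hb : b' = b := add_left_cancel hab
    exact (hne (by rw [hb])).elim
  · have hb : w b' < w b := by linarith
    rw [hv b' hb, mul_zero]

lemma coeff_pow_exact {a : Fin n →₀ ℕ} {u : MvPowerSeries (Fin n) k'}
    (hu : Hw (w a) u) (j : ℕ) :
    coeff (j • a) (u ^ j) = (coeff a u) ^ j := by
  induction j with
  | zero => simp
  | succ m ih =>
    have hp : Hw (w (m • a)) (u ^ m) := by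
      rw [w_smul]; exact Hw_pow (w_nonneg a) hu m
    rw [succ_nsmul, pow_succ, coeff_mul_exact hp hu, ih, pow_succ]

lemma SuppGt_mul_left {t : ℝ} {u : MvPowerSeries (Fin n) k'} (hu : SuppGt t u)
    (v : MvPowerSeries (Fin n) k') : SuppGt t (v * u) := by
  classical
  intro d hd
  rw [MvPowerSeries.coeff_mul]
  apply Finset.sum_eq_zero
  rintro ⟨a, b⟩ hab
  rw [Finset.HasAntidiagonal.mem_antidiagonal] at hab
  have : w b ≤ t := by
    have := w_nonneg a
    have hw : w a + w b = w d := by rw [← w_add, hab]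
    linarith
  rw [hu b this, mul_zero]

lemma exists_lead {u : MvPowerSeries (Fin n) k'} (hu : u ≠ 0) :
    ∃ δ, coeff δ u ≠ 0 ∧ Hw (w δ) u := by
  obtain ⟨d₀, hd₀⟩ : ∃ d, coeff d u ≠ 0 := by
    by_contra h
    push_neg at h
    exact hu (MvPowerSeries.ext fun d => by rw [h d, map_zero])
  classical
  have hTfin : {e : Fin n →₀ ℕ | coeff e u ≠ 0 ∧ w e ≤ w d₀}.Finite :=
    (w_le_finite (w d₀)).subset (fun e he => he.2)
  have hd₀T : d₀ ∈ hTfin.toFinset := by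
    rw [Set.Finite.mem_toFinset]
    exact ⟨hd₀, le_refl _⟩
  obtain ⟨δ, hδT, hδmin⟩ := Finset.exists_min_image hTfin.toFinset w ⟨d₀, hd₀T⟩
  rw [Set.Finite.mem_toFinset] at hδT
  refine ⟨δ, hδT.1, ?_⟩
  intro d hd
  by_contra hcd
  have hdT : d ∈ hTfin.toFinset := by
    rw [Set.Finite.mem_toFinset]
    exact ⟨hcd, le_trans (le_of_lt hd) hδT.2⟩
  exact absurd (hδmin d hdT) (not_le.mpr hd)

lemma Hw_eval_sub {v : ℝ} (hv : 0 ≤ v) (R : Polynomial (MvPowerSeries (Fin n) k'))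
    (g e : MvPowerSeries (Fin n) k') (he : Hw v e) :
    Hw v (R.eval (e + g) - R.eval g) := by
  have h1 : R.eval (e + g) = (taylor g R).eval e := by rw [taylor_eval]
  rw [h1, Polynomial.eval_eq_sum_range, Finset.sum_range_succ']
  have h2 : (taylor g R).coeff 0 * e ^ 0 = R.eval g := by
    rw [pow_zero, mul_one, taylor_coeff_zero]
  rw [h2, add_sub_cancel_right]
  apply Hw_sum
  intro i _
  have h3 := Hw_mul (Hw_nonpos le_rfl ((taylor g R).coeff (i+1))) (Hw_pow hv he (i+1))
  refine Hw_mono ?_ h3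
  have : (1:ℝ) * v ≤ ((i:ℝ)+1) * v := by
    apply mul_le_mul_of_nonneg_right _ hv
    linarith [Nat.cast_nonneg (α := ℝ) i]
  push_cast
  linarith

lemma SuppGt_eval_sub {t : ℝ} (R : Polynomial (MvPowerSeries (Fin n) k'))
    (g e : MvPowerSeries (Fin n) k') (he : SuppGt t e) :
    SuppGt t (R.eval (e + g) - R.eval g) := by
  have h1 : R.eval (e + g) = (taylor g R).eval e := by rw [taylor_eval]
  rw [h1, Polynomial.eval_eq_sum_range, Finset.sum_range_succ']
  have h2 : (taylor g R).coeff 0 * e ^ 0 = R.eval g := by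
    rw [pow_zero, mul_one, taylor_coeff_zero]
  rw [h2, add_sub_cancel_right]
  intro d hd
  rw [map_sum]
  apply Finset.sum_eq_zero
  intro i _
  have h4 : (taylor g R).coeff (i+1) * e ^ (i+1)
      = ((taylor g R).coeff (i+1) * e ^ i) * e := by rw [pow_succ, mul_assoc]
  rw [h4]
  exact SuppGt_mul_left he _ d hd

/-- truncation keeping coefficients of weight `< s` -/
def truncW (s : ℝ) (f : MvPowerSeries (Fin n) k') : MvPowerSeries (Fin n) k' :=
  fun d => if w d < s then coeff d f else 0

lemma coeff_truncW (s : ℝ) (f : MvPowerSeries (Fin n) k') (d : Fin n →₀ ℕ) :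
    coeff d (truncW s f) = if w d < s then coeff d f else 0 := rfl

/-- truncation keeping coefficients of weight `≤ t` -/
def truncWLE (t : ℝ) (f : MvPowerSeries (Fin n) k') : MvPowerSeries (Fin n) k' :=
  fun d => if w d ≤ t then coeff d f else 0

lemma coeff_truncWLE (t : ℝ) (f : MvPowerSeries (Fin n) k') (d : Fin n →₀ ℕ) :
    coeff d (truncWLE t f) = if w d ≤ t then coeff d f else 0 := rfl

end ring

/-! ### Coefficients in an intermediate field -/

section field

variable {k k' : Type*} [Field k] [Field k'] [Algebra k k'] (E : IntermediateField k k')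

def CE (u : MvPowerSeries (Fin n) k') : Prop := ∀ d, coeff d u ∈ E

variable {E}

lemma CE_mul {u v : MvPowerSeries (Fin n) k'} (hu : CE E u) (hv : CE E v) : CE E (u * v) :=
  fun d => by
  classical
  rw [MvPowerSeries.coeff_mul]
  exact sum_mem fun p _ => mul_mem (hu p.1) (hv p.2)

lemma CE_one : CE E (1 : MvPowerSeries (Fin n) k') := fun d => by
  classical
  rw [show (1 : MvPowerSeries (Fin n) k') = MvPowerSeries.monomial 0 1 by
    rw [← MvPowerSeries.monomial_zero_one]]
  rw [MvPowerSeries.coeff_monomial]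
  split <;> simp [one_mem, zero_mem]

lemma CE_pow {u : MvPowerSeries (Fin n) k'} (hu : CE E u) (j : ℕ) : CE E (u ^ j) := by
  induction j with
  | zero => rw [pow_zero]; exact CE_one
  | succ m ih => rw [pow_succ]; exact CE_mul ih hu

lemma CE_sum {ι : Type*} (T : Finset ι) (F : ι → MvPowerSeries (Fin n) k')
    (h : ∀ i ∈ T, CE E (F i)) : CE E (∑ i ∈ T, F i) := fun d => by
  rw [map_sum]; exact sum_mem fun i hi => h i hi d

lemma CE_nsmul {u : MvPowerSeries (Fin n) k'} (hu : CE E u) (m : ℕ) : CE E (m • u) := fun d => by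
  rw [map_nsmul]; exact nsmul_mem (hu d) m

lemma CE_map (a : MvPowerSeries (Fin n) k) :
    CE E (MvPowerSeries.map (algebraMap k k') a) := fun d => by
  rw [MvPowerSeries.coeff_map]
  exact E.algebraMap_mem _

lemma CE_eval {u : MvPowerSeries (Fin n) k'} (Q : Polynomial (MvPowerSeries (Fin n) k'))
    (hQ : ∀ j, CE E (Q.coeff j)) (hu : CE E u) : CE E (Q.eval u) := by
  rw [Polynomial.eval_eq_sum_range]
  exact CE_sum _ _ fun j _ => CE_mul (hQ j) (CE_pow hu j)

lemma CE_taylor {g : MvPowerSeries (Fin n) k'} (Q : Polynomial (MvPowerSeries (Fin n) k'))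
    (hQ : ∀ j, CE E (Q.coeff j)) (hg : CE E g) (j : ℕ) : CE E ((taylor g Q).coeff j) := by
  rw [Polynomial.taylor_coeff]
  apply CE_eval _ _ hg
  intro i
  rw [Polynomial.hasseDeriv_coeff]
  have : ((i + j).choose j : MvPowerSeries (Fin n) k') * Q.coeff (i + j)
      = ((i + j).choose j) • Q.coeff (i + j) := by rw [nsmul_eq_mul]
  rw [this]
  exact CE_nsmul (hQ _) _

lemma leading_alg {Q : Polynomial (MvPowerSeries (Fin n) k')}
    (hQ0 : Q ≠ 0) (hQE : ∀ j, CE E (Q.coeff j)) {u : MvPowerSeries (Fin n) k'}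
    (hroot : Q.eval u = 0) {β₀ : Fin n →₀ ℕ} (hmin : Hw (w β₀) u) :
    IsAlgebraic E (coeff β₀ u) := by
  classical
  set N := Q.natDegree with hN
  set J' : Finset ℕ := (Finset.range (N+1)).filter (fun j => Q.coeff j ≠ 0) with hJ'
  have hNJ : N ∈ J' := by
    rw [hJ', Finset.mem_filter]
    refine ⟨Finset.self_mem_range_succ _, ?_⟩
    rw [Polynomial.coeff_natDegree, Ne, Polynomial.leadingCoeff_eq_zero]
    exact hQ0
  have hδ : ∀ j ∈ J', ∃ δ, coeff δ (Q.coeff j) ≠ 0 ∧ Hw (w δ) (Q.coeff j) := fun j hj =>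
    exists_lead (by rw [hJ', Finset.mem_filter] at hj; exact hj.2)
  choose! δf hδ1 hδ2 using hδ
  set v : ℕ → ℝ := fun j => w (δf j) + j * w β₀ with hv
  obtain ⟨j₀, hj₀J, hj₀min⟩ := Finset.exists_min_image J' v ⟨N, hNJ⟩
  set τ := δf j₀ + j₀ • β₀ with hτ
  have hwτ : w τ = v j₀ := by rw [hτ, w_add, w_smul]
  set c := coeff β₀ u with hcdef
  set J'' := J'.filter (fun j => v j = v j₀) with hJ''
  have hj₀J'' : j₀ ∈ J'' := by rw [hJ'', Finset.mem_filter]; exact ⟨hj₀J, rfl⟩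
  have hupow : ∀ j : ℕ, Hw (w (j • β₀)) (u ^ j) := fun j => by
    rw [w_smul]; exact Hw_pow (w_nonneg _) hmin j
  have h0 : (∑ j ∈ Finset.range (N+1), coeff τ (Q.coeff j * u ^ j)) = 0 := by
    rw [← map_sum, ← Polynomial.eval_eq_sum_range, hroot, map_zero]
  have hterm : ∀ j ∈ Finset.range (N+1),
      coeff τ (Q.coeff j * u ^ j)
        = if j ∈ J'' then coeff (δf j) (Q.coeff j) * c ^ j else 0 := by
    intro j hjr
    by_cases hj' : j ∈ J'
    · have hvj : v j₀ ≤ v j := hj₀min j hj'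
      by_cases heq : v j = v j₀
      · rw [if_pos (by rw [hJ'', Finset.mem_filter]; exact ⟨hj', heq⟩)]
        have hτ2 : δf j + j • β₀ = τ := by
          apply w_inj
          rw [w_add, w_smul, hwτ, ← heq]
        rw [← hτ2, coeff_mul_exact (hδ2 j hj') (hupow j), coeff_pow_exact hmin j]
      · rw [if_neg (by rw [hJ'', Finset.mem_filter]; exact fun h => heq h.2)]
        have h3 := Hw_mul (hδ2 j hj') (hupow j)
        apply h3
        rw [hwτ, w_smul]
        exact lt_of_le_of_ne hvj (Ne.symm heq)
    · have hQj : Q.coeff j = 0 := by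
        by_contra h
        exact hj' (by rw [hJ', Finset.mem_filter]; exact ⟨hjr, h⟩)
      rw [if_neg (by rw [hJ'', Finset.mem_filter]; exact fun h => hj' h.1)]
      rw [hQj, zero_mul, map_zero]
  rw [Finset.sum_congr rfl hterm, Finset.sum_ite_mem,
      Finset.inter_eq_right.mpr (by
        intro j hj
        rw [hJ'', Finset.mem_filter] at hj
        rw [hJ', Finset.mem_filter] at hj
        exact hj.1.1)] at h0
  set q : Polynomial E := ∑ j ∈ J'', Polynomial.C
      (⟨coeff (δf j) (Q.coeff j), hQE j (δf j)⟩ : E) * Polynomial.X ^ j with hq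
  refine ⟨q, ?_, ?_⟩
  · intro hq0
    have h2 := congrArg (fun p => Polynomial.coeff p j₀) hq0
    simp only [hq, finset_sum_coeff, Polynomial.coeff_C_mul, Polynomial.coeff_X_pow,
      Polynomial.coeff_zero] at h2
    rw [Finset.sum_eq_single j₀] at h2
    · simp only [if_pos rfl, mul_one] at h2
      have h5 : coeff (δf j₀) (Q.coeff j₀) = 0 := by
        have h6 := congrArg (Subtype.val) h2
        simpa using h6
      exact hδ1 j₀ hj₀J h5
    · intro j _ hne
      rw [if_neg (fun h => hne h.symm), mul_zero]
    · intro h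
      exact absurd hj₀J'' h
  · rw [hq, map_sum]
    rw [show (0:k') = ∑ j ∈ J'', coeff (δf j) (Q.coeff j) * c ^ j from h0.symm]
    apply Finset.sum_congr rfl
    intro j _
    rw [map_mul, Polynomial.aeval_C, map_pow, Polynomial.aeval_X]
    rfl

/-! ### All coefficients of an algebraic power series are algebraic -/

variable (k) in
lemma map_inj : Function.Injective (MvPowerSeries.map (σ := Fin n) (algebraMap k k')) := by
  intro a b hab
  apply MvPowerSeries.ext
  intro d
  apply (algebraMap k k').injective
  rw [← MvPowerSeries.coeff_map, ← MvPowerSeries.coeff_map, hab]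

lemma coeff_alg {P : Polynomial (MvPowerSeries (Fin n) k)} (hP : P ≠ 0)
    {f : MvPowerSeries (Fin n) k'}
    (hf : Polynomial.eval f (P.map (MvPowerSeries.map (algebraMap k k'))) = 0) :
    ∀ β, IsAlgebraic k (coeff β f) := by
  classical
  have hPι : P.map (MvPowerSeries.map (algebraMap k k')) ≠ 0 := by
    intro h
    exact hP ((Polynomial.map_eq_zero_iff (map_inj k)).mp h)
  apply w_induction (P := fun β => IsAlgebraic k (coeff β f))
  intro β IH
  set Eb := IntermediateField.adjoin k ((fun e => coeff e f) '' {e | w e < w β}) with hEb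
  haveI hfinS : Finite ↥((fun e => coeff e f) '' {e | w e < w β}) :=
    (Set.Finite.image _ (w_lt_finite (w β))).to_subtype
  haveI : FiniteDimensional k Eb := by
    apply IntermediateField.finiteDimensional_adjoin
    rintro x ⟨e, he, rfl⟩
    exact (IH e he).isIntegral
  set g := truncW (w β) f with hg
  set u := f - g with hu
  have hCEg : CE Eb g := by
    intro d
    rw [hg, coeff_truncW]
    split
    · exact IntermediateField.subset_adjoin _ _ ⟨d, by assumption, rfl⟩
    · exact zero_mem _
  have hHu : Hw (w β) u := by
    intro d hd
    rw [hu, map_sub, hg, coeff_truncW, if_pos hd, sub_self]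
  have hug : u + g = f := sub_add_cancel f g
  have hcoefu : coeff β u = coeff β f := by
    rw [hu, map_sub, hg, coeff_truncW, if_neg (lt_irrefl _), sub_zero]
  set Q := taylor g (P.map (MvPowerSeries.map (algebraMap k k'))) with hQdef
  have hQ0 : Q ≠ 0 := by
    intro h
    apply hPι
    have h2 := congrArg (taylor (-g)) h
    rw [taylor_taylor, neg_add_cancel, taylor_zero', LinearMap.map_zero] at h2
    exact h2
  have hQE : ∀ j, CE Eb (Q.coeff j) :=
    CE_taylor _ (fun j => by rw [Polynomial.coeff_map]; exact CE_map _) hCEg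
  have hroot : Q.eval u = 0 := by rw [hQdef, taylor_eval, hug, hf]
  have halgE : IsAlgebraic Eb (coeff β u) := leading_alg hQ0 hQE hroot hHu
  rw [hcoefu] at halgE
  have hint : IsIntegral Eb (coeff β f) := halgE.isIntegral
  haveI : Algebra.IsIntegral k Eb := Algebra.IsIntegral.of_finite k Eb
  exact (isIntegral_trans (coeff β f) hint).isAlgebraic

end field

end
end CutAux

namespace CutAux
noncomputable section
open Polynomial MvPowerSeries

variable {n : ℕ} {k k' : Type*} [Field k] [Field k'] [CharZero k] [Algebra k k']

theorem main (f : MvPowerSeries (Fin n) k')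
    (halg : ∃ P : Polynomial (MvPowerSeries (Fin n) k), P ≠ 0 ∧
        Polynomial.eval f (P.map (MvPowerSeries.map (algebraMap k k'))) = 0) :
    FiniteDimensional k
      (IntermediateField.adjoin k
        {c : k' | ∃ d : Fin n →₀ ℕ, c = MvPowerSeries.coeff d f}) := by
  classical
  obtain ⟨P1, hP1ne, hP1root⟩ := halg
  have hex : ∃ m : ℕ, ∃ P : Polynomial (MvPowerSeries (Fin n) k), P ≠ 0 ∧
      Polynomial.eval f (P.map (MvPowerSeries.map (algebraMap k k'))) = 0 ∧
      P.natDegree = m := ⟨P1.natDegree, P1, hP1ne, hP1root, rfl⟩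
  obtain ⟨P₀, hP₀ne, hP₀root, hP₀deg⟩ := Nat.find_spec hex
  -- `P₀` has positive degree
  have hdeg1 : 1 ≤ P₀.natDegree := by
    by_contra hcon
    push_neg at hcon
    rw [Nat.lt_one_iff] at hcon
    have hC := Polynomial.eq_C_of_natDegree_eq_zero hcon
    rw [hC, Polynomial.map_C, Polynomial.eval_C] at hP₀root
    have hc0 : P₀.coeff 0 = 0 := map_inj k (by rw [hP₀root, map_zero])
    exact hP₀ne (by rw [hC, hc0, map_zero])
  -- the derivative of `P₀` is nonzero
  have hd0 : Polynomial.derivative P₀ ≠ 0 := by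
    intro hder0
    have h1 : (Polynomial.derivative P₀).coeff (P₀.natDegree - 1) = 0 := by
      rw [hder0, Polynomial.coeff_zero]
    rw [Polynomial.coeff_derivative] at h1
    have h2 : P₀.natDegree - 1 + 1 = P₀.natDegree := Nat.succ_pred_eq_of_pos hdeg1
    rw [h2] at h1
    have hlc : P₀.coeff P₀.natDegree ≠ 0 := by
      rw [Polynomial.coeff_natDegree, Ne, Polynomial.leadingCoeff_eq_zero]
      exact hP₀ne
    obtain ⟨e, he⟩ : ∃ e, MvPowerSeries.coeff e (P₀.coeff P₀.natDegree) ≠ 0 := by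
      by_contra hcon
      push_neg at hcon
      exact hlc (MvPowerSeries.ext fun e => by rw [hcon e, map_zero])
    have h3 := congrArg (MvPowerSeries.coeff e) h1
    rw [map_zero] at h3
    have h4 : (((P₀.natDegree - 1 : ℕ) : MvPowerSeries (Fin n) k) + 1)
        = ((P₀.natDegree : ℕ) : MvPowerSeries (Fin n) k) := by
      rw [← Nat.cast_succ, Nat.succ_eq_add_one, h2]
    rw [h4] at h3
    have h5 : P₀.coeff P₀.natDegree * ((P₀.natDegree : ℕ) : MvPowerSeries (Fin n) k)
        = (P₀.natDegree : ℕ) • P₀.coeff P₀.natDegree := by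
      rw [nsmul_eq_mul, mul_comm]
    rw [h5, map_nsmul] at h3
    rw [nsmul_eq_mul] at h3
    rcases mul_eq_zero.mp h3 with h6 | h6
    · rw [Nat.cast_eq_zero] at h6
      omega
    · exact he h6
  -- by minimality, the derivative does not annihilate f
  have hder : Polynomial.eval f
      ((Polynomial.derivative P₀).map (MvPowerSeries.map (algebraMap k k'))) ≠ 0 := by
    intro hcon
    have h7 : Nat.find hex ≤ (Polynomial.derivative P₀).natDegree :=
      Nat.find_min' hex ⟨Polynomial.derivative P₀, hd0, hcon, rfl⟩
    have h8 : (Polynomial.derivative P₀).natDegree < P₀.natDegree :=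
      Polynomial.natDegree_derivative_lt (by omega)
    omega
  -- leading data of h := P₀'(f)
  obtain ⟨δ, hμ, hHδ⟩ := exists_lead hder
  set hh := Polynomial.eval f
      ((Polynomial.derivative P₀).map (MvPowerSeries.map (algebraMap k k'))) with hhdef
  set γ := w δ with hγ
  have hγ0 : 0 ≤ γ := w_nonneg δ
  set T : Set k' := (fun d => MvPowerSeries.coeff d f) '' {d | w d ≤ 2*γ} with hT
  set E := IntermediateField.adjoin k T with hE
  set μ := MvPowerSeries.coeff δ hh with hμdef
  -- μ ∈ E
  have hμE : μ ∈ E := by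
    set g₀ := truncWLE (2*γ) f with hg₀
    set e₀ := f - g₀ with he₀
    have hSupp : SuppGt (2*γ) e₀ := by
      intro d hd
      rw [he₀, map_sub, hg₀, coeff_truncWLE, if_pos hd, sub_self]
    have he₀g : e₀ + g₀ = f := sub_add_cancel f g₀
    have hCEg₀ : CE E g₀ := by
      intro d
      rw [hg₀, coeff_truncWLE]
      split
      · exact IntermediateField.subset_adjoin _ _ ⟨d, by assumption, rfl⟩
      · exact zero_mem _
    have h1 := SuppGt_eval_sub
      ((Polynomial.derivative P₀).map (MvPowerSeries.map (algebraMap k k'))) g₀ e₀ hSupp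
    rw [he₀g] at h1
    have h2 := h1 δ (by linarith)
    rw [map_sub] at h2
    have h3 : μ = MvPowerSeries.coeff δ (Polynomial.eval g₀
        ((Polynomial.derivative P₀).map (MvPowerSeries.map (algebraMap k k')))) :=
      sub_eq_zero.mp h2
    rw [h3]
    exact CE_eval _ (fun j => by rw [Polynomial.coeff_map]; exact CE_map _) hCEg₀ δ
  -- the main induction: every coefficient of f lies in E
  have claim1 : ∀ β, MvPowerSeries.coeff β f ∈ E := by
    apply w_induction
    intro β IH
    by_cases hβ : w β ≤ 2*γ
    · exact IntermediateField.subset_adjoin _ _ ⟨β, hβ, rfl⟩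
    push_neg at hβ
    have hwβ0 : 0 ≤ w β := w_nonneg β
    have hγβ : γ < w β := by linarith
    set g := truncW (w β) f with hg
    set e := f - g with he
    have hCEg : CE E g := by
      intro d
      rw [hg, coeff_truncW]
      split
      · exact IH d (by assumption)
      · exact zero_mem _
    have hHe : Hw (w β) e := by
      intro d hd
      rw [he, map_sub, hg, coeff_truncW, if_pos hd, sub_self]
    have heg : e + g = f := sub_add_cancel f g
    have hcβ : MvPowerSeries.coeff β e = MvPowerSeries.coeff β f := by
      rw [he, map_sub, hg, coeff_truncW, if_neg (lt_irrefl _), sub_zero]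
    set Q := taylor g (P₀.map (MvPowerSeries.map (algebraMap k k'))) with hQdef
    have hroot : Q.eval e = 0 := by rw [hQdef, taylor_eval, heg, hP₀root]
    have hQE : ∀ j, CE E (Q.coeff j) :=
      CE_taylor _ (fun j => by rw [Polynomial.coeff_map]; exact CE_map _) hCEg
    set N := Q.natDegree with hNdef
    have hN1 : 1 ≤ N := by
      rw [hNdef, hQdef, natDegree_taylor, Polynomial.natDegree_map_eq_of_injective (map_inj k)]
      exact hdeg1
    have h0 : (∑ j ∈ Finset.range (N+1),
        MvPowerSeries.coeff (δ + β) (Q.coeff j * e ^ j)) = 0 := by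
      rw [← map_sum, ← Polynomial.eval_eq_sum_range, hroot, map_zero]
    rw [Finset.range_eq_Ico,
      ← Finset.sum_Ico_consecutive _ (by omega : 0 ≤ 2) (by omega : 2 ≤ N+1)] at h0
    have hj2 : (∑ j ∈ Finset.Ico 2 (N+1),
        MvPowerSeries.coeff (δ + β) (Q.coeff j * e ^ j)) = 0 := by
      apply Finset.sum_eq_zero
      intro j hj
      obtain ⟨hj2, _⟩ := Finset.mem_Ico.mp hj
      have h3 := Hw_mul (Hw_nonpos le_rfl (Q.coeff j)) (Hw_pow hwβ0 hHe j)
      apply h3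
      rw [w_add]
      have : (2:ℝ) ≤ (j:ℝ) := by exact_mod_cast hj2
      nlinarith
    rw [hj2, add_zero] at h0
    have hIco02 : Finset.Ico 0 2 = Finset.range 2 := by rw [Finset.range_eq_Ico]
    rw [hIco02, Finset.sum_range_succ, Finset.sum_range_one] at h0
    set A := MvPowerSeries.coeff (δ + β) (Q.coeff 0) with hA
    have hAE : A ∈ E := hQE 0 (δ + β)
    have hF0 : MvPowerSeries.coeff (δ + β) (Q.coeff 0 * e ^ 0) = A := by
      rw [pow_zero, mul_one]
    have hQ1 : Q.coeff 1 = Polynomial.eval g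
        ((Polynomial.derivative P₀).map (MvPowerSeries.map (algebraMap k k'))) := by
      rw [hQdef, taylor_coeff_one, Polynomial.derivative_map]
    have hdiffHw : Hw (w β) (hh - Q.coeff 1) := by
      have h4 := Hw_eval_sub hwβ0
        ((Polynomial.derivative P₀).map (MvPowerSeries.map (algebraMap k k'))) g e hHe
      rw [heg] at h4
      rw [hQ1]
      exact h4
    have hF1 : MvPowerSeries.coeff (δ + β) (Q.coeff 1 * e ^ 1)
        = μ * MvPowerSeries.coeff β f := by
      rw [pow_one]
      have h5 : Q.coeff 1 * e = hh * e - (hh - Q.coeff 1) * e := by ring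
      rw [h5, map_sub, coeff_mul_exact hHδ hHe]
      have h6 : MvPowerSeries.coeff (δ + β) ((hh - Q.coeff 1) * e) = 0 := by
        have h7 := Hw_mul hdiffHw hHe
        apply h7
        rw [w_add]
        linarith
      rw [h6, sub_zero, hcβ]
    rw [hF0, hF1] at h0
    -- h0 : A + μ * coeff β f = 0
    have hc : MvPowerSeries.coeff β f = μ⁻¹ * (-A) := by
      have h8 : μ * MvPowerSeries.coeff β f = -A := by linear_combination h0
      rw [← h8, inv_mul_cancel_left₀ hμ]
    rw [hc]
    exact mul_mem (inv_mem hμE) (neg_mem hAE)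
  -- E is finite dimensional over k
  haveI hfinT : Finite ↥T := (Set.Finite.image _ (w_le_finite (2*γ))).to_subtype
  haveI claim2 : FiniteDimensional k E := by
    apply IntermediateField.finiteDimensional_adjoin
    rintro x ⟨d, _, rfl⟩
    exact (coeff_alg hP₀ne hP₀root d).isIntegral
  have hEq : IntermediateField.adjoin k
      {c : k' | ∃ d : Fin n →₀ ℕ, c = MvPowerSeries.coeff d f} = E := by
    apply le_antisymm
    · rw [IntermediateField.adjoin_le_iff]
      rintro c ⟨d, rfl⟩
      exact claim1 d
    · rw [hE]
      apply IntermediateField.adjoin.mono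
      rintro c ⟨d, _, rfl⟩
      exact ⟨d, rfl⟩
  rw [hEq]
  exact claim2

end
end CutAux

/-- **Proposition (Cutkosky–Kashcheyeva).**  Let `k → k'` be a field extension in
characteristic zero, and let `f ∈ k'[[x₁,...,xₙ]]` be algebraic over `k[[x₁,...,xₙ]]`
(i.e. `f` is a root of a nonzero polynomial with coefficients in `k[[x₁,...,xₙ]]`).
Then the subfield of `k'` generated over `k` by all the coefficients of `f` is a finite
field extension of `k`. -/
theorem coeff_field_finite_of_algebraic (n : ℕ) (k k' : Type*) [Field k] [Field k']
    [CharZero k] [Algebra k k']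
    (f : MvPowerSeries (Fin n) k')
    (halg : ∃ P : Polynomial (MvPowerSeries (Fin n) k), P ≠ 0 ∧
        Polynomial.eval f (P.map (MvPowerSeries.map (algebraMap k k'))) = 0) :
    FiniteDimensional k
      (IntermediateField.adjoin k
        {c : k' | ∃ d : Fin n →₀ ℕ, c = MvPowerSeries.coeff d f}) :=
  CutAux.main f halg
end
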